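/- arXiv:2601.23125 — 4 statements merged into one kernel-verified Lean document; each statement's English description precedes it below -/
import Mathlib

section
/- Let f = Σ_γ c_γ x^γ ∈ ℂ[x₁,…,xₙ] be a nonzero polynomial. For every γ ∈ Supp(f) there exists a finitely supported function a : ℕⁿ → ℂ with support contained in {δ ∈ Supp(f) : γ ≤ δ} and with a(γ) = 1, such that Σ_δ a(δ) · x^{δ−γ} · (∂^δ f) = c_γ · γ! (as a constant polynomial). In other words, the operator P_γ = Σ_δ a(δ) x^{δ−γ} ∂^δ satisfies P_γ • f = c_γ γ!. -/
open MvPolynomial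
open scoped Classical Pointwise

noncomputable def evalR {n : ℕ} (f : MvPolynomial (Fin n) ℂ) (x : Fin n → ℝ) : ℂ :=
  MvPolynomial.eval (fun i => (x i : ℂ)) f

noncomputable def pd {n : ℕ} (i : Fin n) (g : (Fin n → ℝ) → ℂ) : (Fin n → ℝ) → ℂ :=
  fun x => fderiv ℝ g x (Pi.single i 1)

noncomputable def pdIter {n : ℕ} (β : Fin n → ℕ) (g : (Fin n → ℝ) → ℂ) : (Fin n → ℝ) → ℂ :=
  ((List.ofFn (fun i : Fin n => (pd i)^[β i])).foldr (· ∘ ·) id) g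

noncomputable def pdPoly {n : ℕ} (β : Fin n → ℕ) (f : MvPolynomial (Fin n) ℂ) :
    MvPolynomial (Fin n) ℂ :=
  ((List.ofFn (fun i : Fin n => (fun h => MvPolynomial.pderiv i h)^[β i])).foldr (· ∘ ·) id) f

noncomputable def newton {n : ℕ} (f : MvPolynomial (Fin n) ℂ) : Set (Fin n → ℝ) :=
  convexHull ℝ ((fun γ : Fin n →₀ ℕ => fun i => (γ i : ℝ)) '' ↑f.support)

noncomputable def ordW {n : ℕ} (f : MvPolynomial (Fin n) ℂ) (ω : Fin n → ℝ) : ℝ :=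
  sInf ((fun γ : Fin n →₀ ℕ => ∑ i, (γ i : ℝ) * ω i) '' ↑f.support)

noncomputable def initForm {n : ℕ} (ω : Fin n → ℝ) (f : MvPolynomial (Fin n) ℂ) :
    MvPolynomial (Fin n) ℂ :=
  ∑ γ ∈ f.support.filter (fun γ => ∑ i, (γ i : ℝ) * ω i = ordW f ω),
    MvPolynomial.monomial γ (MvPolynomial.coeff γ f)

/- ### Auxiliary lemmas -/

lemma pderiv_iter {n : ℕ} (i : Fin n) (k : ℕ) (s : Fin n →₀ ℕ) (c : ℂ) :
    (fun h => MvPolynomial.pderiv i h)^[k] (monomial s c)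
      = monomial (s - Finsupp.single i k) (c * ((s i).descFactorial k : ℂ)) := by
  induction k with
  | zero => simp
  | succ k ih =>
    rw [Function.iterate_succ_apply', ih, pderiv_monomial]
    have h1 : s - Finsupp.single i k - Finsupp.single i 1 = s - Finsupp.single i (k + 1) := by
      ext j
      simp only [Finsupp.tsub_apply, Finsupp.single_apply]
      by_cases h : i = j
      · simp [h]; omega
      · simp [h]
    have h2 : (s - Finsupp.single i k) i = s i - k := by
      simp [Finsupp.tsub_apply]
    rw [h1, h2, Nat.descFactorial_succ]
    push_cast
    ring

lemma foldr_monomial {n : ℕ} (β : Fin n → ℕ) (l : List (Fin n)) (hl : l.Nodup)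
    (s : Fin n →₀ ℕ) (c : ℂ) :
    ((l.map (fun i => (fun h => MvPolynomial.pderiv i h)^[β i])).foldr (· ∘ ·) id) (monomial s c)
      = monomial (s - ∑ i ∈ l.toFinset, Finsupp.single i (β i))
          (c * ∏ i ∈ l.toFinset, ((s i).descFactorial (β i) : ℂ)) := by
  induction l with
  | nil => simp
  | cons i t ih =>
    have hit : i ∉ t := (List.nodup_cons.mp hl).1
    have ht : t.Nodup := (List.nodup_cons.mp hl).2
    simp only [List.map_cons, List.foldr_cons, Function.comp_apply, ih ht]
    rw [pderiv_iter]
    have hiF : i ∉ t.toFinset := by simpa using hit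
    have hs : (s - ∑ j ∈ t.toFinset, Finsupp.single j (β j)) i = s i := by
      rw [Finsupp.tsub_apply]
      have : (∑ j ∈ t.toFinset, Finsupp.single j (β j)) i = 0 := by
        rw [Finset.sum_apply']
        exact Finset.sum_eq_zero fun j hj => by
          rw [Finsupp.single_apply, if_neg]
          rintro rfl; exact hiF hj
      omega
    have hexp : s - ∑ j ∈ t.toFinset, Finsupp.single j (β j) - Finsupp.single i (β i)
        = s - ∑ j ∈ (i :: t).toFinset, Finsupp.single j (β j) := by
      rw [List.toFinset_cons, Finset.sum_insert hiF, tsub_tsub, add_comm]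
    rw [hexp, hs, List.toFinset_cons, Finset.prod_insert hiF]
    ring_nf

lemma pdPoly_monomial {n : ℕ} (δ : Fin n →₀ ℕ) (s : Fin n →₀ ℕ) (c : ℂ) :
    pdPoly (⇑δ) (monomial s c)
      = monomial (s - δ) (c * ∏ i, ((s i).descFactorial (δ i) : ℂ)) := by
  rw [pdPoly, List.ofFn_eq_map, foldr_monomial _ _ (List.nodup_finRange n), List.toFinset_finRange]
  congr 2
  ext j
  simp [Finsupp.single_apply, Finset.sum_apply']

lemma foldr_add {n : ℕ} (β : Fin n → ℕ) (l : List (Fin n)) (f g : MvPolynomial (Fin n) ℂ) :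
    ((l.map (fun i => (fun h => MvPolynomial.pderiv i h)^[β i])).foldr (· ∘ ·) id) (f + g)
      = ((l.map (fun i => (fun h => MvPolynomial.pderiv i h)^[β i])).foldr (· ∘ ·) id) f
      + ((l.map (fun i => (fun h => MvPolynomial.pderiv i h)^[β i])).foldr (· ∘ ·) id) g := by
  induction l generalizing f g with
  | nil => simp
  | cons i t ih =>
    simp only [List.map_cons, List.foldr_cons, Function.comp_apply, ih]
    generalize ((t.map (fun i => (fun h => MvPolynomial.pderiv i h)^[β i])).foldr (· ∘ ·) id) f = F
    generalize ((t.map (fun i => (fun h => MvPolynomial.pderiv i h)^[β i])).foldr (· ∘ ·) id) g = G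
    induction β i with
    | zero => simp
    | succ k ihk => simp [Function.iterate_succ_apply', ihk, map_add]

lemma foldr_zero {n : ℕ} (β : Fin n → ℕ) (l : List (Fin n)) :
    ((l.map (fun i => (fun h => MvPolynomial.pderiv i h)^[β i])).foldr (· ∘ ·) id)
      (0 : MvPolynomial (Fin n) ℂ) = 0 := by
  induction l with
  | nil => simp
  | cons i t ih =>
    simp only [List.map_cons, List.foldr_cons, Function.comp_apply, ih]
    induction β i with
    | zero => simp
    | succ k ihk => simp [Function.iterate_succ_apply', ihk]

lemma pdPoly_sum {n : ℕ} (β : Fin n → ℕ) {α : Type*} (s : Finset α)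
    (g : α → MvPolynomial (Fin n) ℂ) :
    pdPoly β (∑ x ∈ s, g x) = ∑ x ∈ s, pdPoly β (g x) := by
  classical
  induction s using Finset.induction with
  | empty =>
    simp only [Finset.sum_empty, pdPoly, List.ofFn_eq_map]
    exact foldr_zero β _
  | insert _ _ hx ih =>
    rw [Finset.sum_insert hx, Finset.sum_insert hx, ← ih]
    simp only [pdPoly, List.ofFn_eq_map]
    exact foldr_add β _ _ _

lemma key_exists {n : ℕ} (w : (Fin n →₀ ℕ) → (Fin n →₀ ℕ) → ℂ) (γ : Fin n →₀ ℕ) :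
    ∀ T : Finset (Fin n →₀ ℕ), γ ∈ T → (∀ δ ∈ T, γ ≤ δ) → (∀ ε ∈ T, w ε ε ≠ 0) →
    ∃ a : (Fin n →₀ ℕ) → ℂ, (∀ δ, δ ∉ T → a δ = 0) ∧ a γ = 1 ∧
      ∀ ε ∈ T, ε ≠ γ → ∑ δ ∈ T.filter (fun δ => δ ≤ ε), a δ * w ε δ = 0 := by
  intro T
  induction T using Finset.strongInduction with
  | _ T ih =>
    intro hγT hmin hw
    obtain ⟨ε0, hε0T, hmax⟩ := T.exists_maximal ⟨γ, hγT⟩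
    by_cases hcase : ε0 = γ
    · have hT : T = {γ} := by
        apply Finset.eq_singleton_iff_unique_mem.mpr
        refine ⟨hγT, fun δ hδ => ?_⟩
        by_contra hne
        exact not_le_of_gt (lt_of_le_of_ne (hcase ▸ hmin δ hδ) (hcase ▸ Ne.symm hne)) (hmax hδ (hcase ▸ hmin δ hδ))
      refine ⟨fun δ => if δ = γ then 1 else 0, ?_, by simp, ?_⟩
      · intro δ hδ
        show (if δ = γ then (1:ℂ) else 0) = 0
        rw [if_neg]; rintro rfl; exact hδ hγT
      · intro ε hε hne
        exact absurd (hT ▸ hε) (by simpa using hne)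
    · set T' := T.erase ε0 with hT'
      have hγT' : γ ∈ T' := Finset.mem_erase.mpr ⟨Ne.symm hcase, hγT⟩
      obtain ⟨a', ha'0, ha'γ, ha'eq⟩ := ih T' (Finset.erase_ssubset hε0T) hγT'
        (fun δ hδ => hmin δ (Finset.mem_of_mem_erase hδ))
        (fun ε hε => hw ε (Finset.mem_of_mem_erase hε))
      refine ⟨Function.update a' ε0
        (-(w ε0 ε0)⁻¹ * ∑ δ ∈ T'.filter (fun δ => δ ≤ ε0), a' δ * w ε0 δ), ?_, ?_, ?_⟩
      · intro δ hδ
        rw [Function.update_of_ne (by rintro rfl; exact hδ hε0T)]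
        exact ha'0 δ (fun h => hδ (Finset.mem_of_mem_erase h))
      · rw [Function.update_of_ne (Ne.symm hcase)]; exact ha'γ
      · intro ε hε hne
        by_cases hee : ε = ε0
        · subst hee
          have hmem : ε ∈ T.filter (fun δ => δ ≤ ε) := Finset.mem_filter.mpr ⟨hε, le_refl ε⟩
          rw [← Finset.sum_erase_add _ _ hmem]
          rw [Function.update_self]
          have hrw : (T.filter (fun δ => δ ≤ ε)).erase ε = T'.filter (fun δ => δ ≤ ε) := by
            rw [hT', Finset.filter_erase]
          have hsame : ∀ δ ∈ (T.filter (fun δ => δ ≤ ε)).erase ε,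
              Function.update a' ε (-(w ε ε)⁻¹ * ∑ δ ∈ T'.filter (fun δ => δ ≤ ε), a' δ * w ε δ) δ * w ε δ
                = a' δ * w ε δ := by
            intro δ hδ
            rw [Function.update_of_ne (Finset.ne_of_mem_erase hδ)]
          rw [Finset.sum_congr rfl hsame, hrw]
          field_simp [hw ε hε]
          ring
        · have hε' : ε ∈ T' := Finset.mem_erase.mpr ⟨hee, hε⟩
          have hnomem : ε0 ∉ T.filter (fun δ => δ ≤ ε) := by
            simp only [Finset.mem_filter, not_and]
            intro _ hle
            exact not_le_of_gt (lt_of_le_of_ne hle (Ne.symm hee)) (hmax hε hle)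
          have hrw : T.filter (fun δ => δ ≤ ε) = T'.filter (fun δ => δ ≤ ε) := by
            rw [hT', Finset.filter_erase, Finset.erase_eq_of_notMem hnomem]
          rw [hrw]
          have hsame : ∀ δ ∈ T'.filter (fun δ => δ ≤ ε),
              Function.update a' ε0 (-(w ε0 ε0)⁻¹ * ∑ δ ∈ T'.filter (fun δ => δ ≤ ε0), a' δ * w ε0 δ) δ * w ε δ
                = a' δ * w ε δ := by
            intro δ hδ
            rw [Function.update_of_ne]
            rintro rfl
            exact (Finset.notMem_erase _ T) (Finset.filter_subset _ _ hδ)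
          rw [Finset.sum_congr rfl hsame]
          exact ha'eq ε hε' hne

/-- for every `γ ∈ Supp(f)` there is an operator
`P_γ = Σ_δ a(δ) x^{δ−γ} ∂^δ`, with `a` supported on `{δ ∈ Supp(f) : γ ≤ δ}` and
`a(γ) = 1`, such that `P_γ • f = c_γ γ!`. -/
theorem stmt2 (n : ℕ) (f : MvPolynomial (Fin n) ℂ) (hf : f ≠ 0) (γ : Fin n →₀ ℕ)
    (hγ : γ ∈ f.support) :
    ∃ a : (Fin n →₀ ℕ) → ℂ, a γ = 1 ∧
      ∑ δ ∈ f.support.filter (fun δ => γ ≤ δ),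
          MvPolynomial.monomial (δ - γ) (a δ) * pdPoly (⇑δ) f
        = MvPolynomial.C (MvPolynomial.coeff γ f * ((∏ i, (γ i).factorial : ℕ) : ℂ)) := by
  classical
  set S := f.support.filter (fun δ => γ ≤ δ) with hS
  have hγS : γ ∈ S := Finset.mem_filter.mpr ⟨hγ, le_refl γ⟩
  set w : (Fin n →₀ ℕ) → (Fin n →₀ ℕ) → ℂ :=
    fun ε δ => ∏ i, ((ε i).descFactorial (δ i) : ℂ) with hwdef
  have hwne : ∀ ε ∈ S, w ε ε ≠ 0 := by
    intro ε _
    refine Finset.prod_ne_zero_iff.mpr fun i _ => ?_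
    rw [Nat.descFactorial_self]
    exact_mod_cast (Nat.factorial_pos _).ne'
  obtain ⟨a, ha0, haγ, haeq⟩ := key_exists w γ S hγS (fun δ hδ => (Finset.mem_filter.mp hδ).2) hwne
  refine ⟨a, haγ, ?_⟩
  have hpd : ∀ δ : Fin n →₀ ℕ, pdPoly (⇑δ) f
      = ∑ ε ∈ f.support, monomial (ε - δ) (coeff ε f * w ε δ) := by
    intro δ
    conv_lhs => rw [f.as_sum]
    rw [pdPoly_sum]
    exact Finset.sum_congr rfl fun ε _ => pdPoly_monomial δ ε _
  have step1 : ∑ δ ∈ S, monomial (δ - γ) (a δ) * pdPoly (⇑δ) f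
      = ∑ ε ∈ f.support, ∑ δ ∈ S, monomial ((δ - γ) + (ε - δ)) (a δ * (coeff ε f * w ε δ)) := by
    rw [Finset.sum_comm]
    refine Finset.sum_congr rfl fun δ hδ => ?_
    rw [hpd δ, Finset.mul_sum]
    exact Finset.sum_congr rfl fun ε _ => by rw [monomial_mul]
  have step2 : ∀ ε ∈ f.support,
      ∑ δ ∈ S, monomial ((δ - γ) + (ε - δ)) (a δ * (coeff ε f * w ε δ))
        = monomial (ε - γ) (coeff ε f * ∑ δ ∈ S.filter (fun δ => δ ≤ ε), a δ * w ε δ) := by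
    intro ε _
    rw [← Finset.sum_filter_of_ne (p := fun δ => δ ≤ ε)
      (f := fun δ => monomial ((δ - γ) + (ε - δ)) (a δ * (coeff ε f * w ε δ)))]
    · have hcong : ∀ δ ∈ S.filter (fun δ => δ ≤ ε),
          monomial ((δ - γ) + (ε - δ)) (a δ * (coeff ε f * w ε δ))
            = monomial (ε - γ) (coeff ε f * (a δ * w ε δ)) := by
        intro δ hδ
        obtain ⟨hδS, hδε⟩ := Finset.mem_filter.mp hδ
        have hγδ : γ ≤ δ := (Finset.mem_filter.mp hδS).2
        have hexp : (δ - γ) + (ε - δ) = ε - γ := by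
          ext i
          have h1 := hγδ i
          have h2 := hδε i
          simp only [Finsupp.add_apply, Finsupp.tsub_apply]
          omega
        rw [hexp, mul_left_comm]
      rw [Finset.sum_congr rfl hcong, ← map_sum, ← Finset.mul_sum]
    · intro δ _ hne
      by_contra hle
      apply hne
      have : w ε δ = 0 := by
        obtain ⟨i, hi⟩ := not_forall.mp (fun h => hle (Finsupp.le_def.mpr h))
        refine Finset.prod_eq_zero (Finset.mem_univ i) ?_
        rw [Nat.descFactorial_eq_zero_iff_lt.mpr (by omega)]
        simp
      rw [this, mul_zero, mul_zero, map_zero]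
  have step3 : ∀ ε ∈ f.support, ε ≠ γ →
      monomial (ε - γ) (coeff ε f * ∑ δ ∈ S.filter (fun δ => δ ≤ ε), a δ * w ε δ) = 0 := by
    intro ε hεf hne
    by_cases hγε : γ ≤ ε
    · have hεS : ε ∈ S := Finset.mem_filter.mpr ⟨hεf, hγε⟩
      rw [haeq ε hεS hne, mul_zero, map_zero]
    · have : S.filter (fun δ => δ ≤ ε) = ∅ := by
        refine Finset.filter_eq_empty_iff.mpr fun δ hδ hle => ?_
        exact hγε (le_trans (Finset.mem_filter.mp hδ).2 hle)
      rw [this, Finset.sum_empty, mul_zero, map_zero]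
  rw [step1, Finset.sum_congr rfl step2, Finset.sum_eq_single γ step3 (fun h => absurd hγ h)]
  have hfilt : S.filter (fun δ => δ ≤ γ) = {γ} := by
    apply Finset.eq_singleton_iff_unique_mem.mpr
    refine ⟨Finset.mem_filter.mpr ⟨hγS, le_refl γ⟩, fun δ hδ => ?_⟩
    obtain ⟨hδS, hδγ⟩ := Finset.mem_filter.mp hδ
    exact le_antisymm hδγ (Finset.mem_filter.mp hδS).2
  rw [hfilt, Finset.sum_singleton, haγ, one_mul, tsub_self]
  rw [monomial_zero']
  congr 1
  congr 1
  rw [Nat.cast_prod]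
  exact Finset.prod_congr rfl fun i _ => by rw [Nat.descFactorial_self]
end

section
/- Let f ∈ ℂ[x₁,…,xₙ] be a nonzero polynomial, ℓ ∈ ℕ, ω ∈ ℝⁿ∖{0}, and 1 ≤ i ≤ n. Set λ_i = max{γ_i : γ ∈ Supp(f), ⟨γ,ω⟩ = ord_f(ω)}. Then there exists a polynomial-coefficient differential operator Q = ∂_i^{ℓλ_i+1} + Σ_{(α,β)∈A} c_{αβ} x^α ∂^β, with A finite and every (α,β) ∈ A satisfying ⟨ω,β⟩ − ⟨ω,α⟩ < (ℓλ_i+1)·ω_i, such that Q • f^ℓ = 0 as a polynomial identity (i.e. ∂_i^{ℓλ_i+1}(f^ℓ) + Σ_{(α,β)∈A} c_{αβ} x^α ∂^β(f^ℓ) = 0). In other words, ∂_i^{ℓλ_i+1} is the (−ω,ω)-initial form of an operator annihilating f^ℓ. -/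
open MvPolynomial
open scoped Classical Pointwise

lemma coeff_pderiv {n : ℕ} (i : Fin n) (γ : Fin n →₀ ℕ) (f : MvPolynomial (Fin n) ℂ) :
    coeff γ (pderiv i f) = ((γ i + 1 : ℕ) : ℂ) * coeff (γ + Finsupp.single i 1) f := by
  induction f using MvPolynomial.induction_on' with
  | monomial s a =>
    by_cases h : γ + Finsupp.single i 1 = s
    · have hs : s - Finsupp.single i 1 = γ := by rw [← h, add_tsub_cancel_right]
      have hsi : s i = γ i + 1 := by rw [← h]; simp
      simp [pderiv_monomial, coeff_monomial, hs, hsi, mul_comm, h.symm]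
    · by_cases h2 : γ = s - Finsupp.single i 1
      · by_cases h3 : s i = 0
        · have hs : s - Finsupp.single i 1 = s := by
            ext k
            by_cases hk : k = i
            · subst hk; simp [h3]
            · simp [Finsupp.single_apply, Ne.symm hk]
          simp [pderiv_monomial, coeff_monomial, h2, hs, h3, h]
        · exfalso
          apply h
          rw [h2, tsub_add_cancel_of_le]
          rwa [Finsupp.single_le_iff, Nat.one_le_iff_ne_zero]
      · simp only [pderiv_monomial, coeff_monomial, Ne.symm h, if_false]
        rw [if_neg (fun hh => h2 hh.symm)]
        simp
  | add p q hp hq => simp [map_add, hp, hq, mul_add]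

lemma coeff_pderiv_iterate {n : ℕ} (i : Fin n) (b : ℕ) (γ : Fin n →₀ ℕ)
    (f : MvPolynomial (Fin n) ℂ) :
    coeff γ ((fun h => pderiv i h)^[b] f) =
      (((γ i + b).descFactorial b : ℕ) : ℂ) * coeff (γ + Finsupp.single i b) f := by
  induction b generalizing γ with
  | zero => simp
  | succ b ih =>
    rw [Function.iterate_succ_apply']
    rw [coeff_pderiv, ih]
    have h1 : ((γ + Finsupp.single i 1 : Fin n →₀ ℕ)) i = γ i + 1 := by
      rw [Finsupp.add_apply, Finsupp.single_eq_same]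
    have h2 : γ + Finsupp.single i 1 + Finsupp.single i b = γ + Finsupp.single i (b + 1) := by
      rw [add_assoc, ← Finsupp.single_add, add_comm 1 b]
    rw [h1, h2, ← mul_assoc, ← Nat.cast_mul]
    congr 2
    have : γ i + (b + 1) = (γ i + 1) + b := by omega
    rw [this, Nat.descFactorial_succ]
    have : γ i + 1 + b - b = γ i + 1 := by omega
    rw [this, mul_comm]

lemma pdList_coeff {n : ℕ} (β : Fin n →₀ ℕ) (l : List (Fin n)) (hl : l.Nodup)
    (γ : Fin n →₀ ℕ) (f : MvPolynomial (Fin n) ℂ) :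
    coeff γ (((l.map (fun j => (fun h => pderiv j h)^[β j])).foldr (· ∘ ·) id) f) =
      (((l.map (fun j => (γ j + β j).descFactorial (β j))).prod : ℕ) : ℂ) *
        coeff (γ + (l.map (fun j => Finsupp.single j (β j))).sum) f := by
  induction l generalizing γ with
  | nil => simp
  | cons j t ih =>
    have hj : j ∉ t := (List.nodup_cons.mp hl).1
    have ht : t.Nodup := (List.nodup_cons.mp hl).2
    simp only [List.map_cons, List.foldr_cons, Function.comp_apply, List.prod_cons,
      List.sum_cons]
    rw [coeff_pderiv_iterate, ih ht]
    have hcongr : (t.map (fun k => ((γ + Finsupp.single j (β j)) k + β k).descFactorial (β k)))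
        = (t.map (fun k => (γ k + β k).descFactorial (β k))) := by
      apply List.map_congr_left
      intro k hk
      have : (γ + Finsupp.single j (β j)) k = γ k := by
        have : j ≠ k := fun h => hj (h ▸ hk)
        simp [Finsupp.single_apply, this]
      rw [this]
    rw [hcongr, ← mul_assoc, ← Nat.cast_mul]
    congr 2
    rw [add_assoc]

lemma coeff_pdPoly {n : ℕ} (β : Fin n →₀ ℕ) (γ : Fin n →₀ ℕ) (f : MvPolynomial (Fin n) ℂ) :
    coeff γ (pdPoly ⇑β f) =
      (((∏ k, (γ k + β k).descFactorial (β k)) : ℕ) : ℂ) * coeff (γ + β) f := by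
  rw [pdPoly, List.ofFn_eq_map, pdList_coeff β _ (List.nodup_finRange n)]
  congr 2
  rw [← Fin.sum_univ_def, Finsupp.univ_sum_single]

section RepE
variable {n : ℕ} (g : MvPolynomial (Fin n) ℂ)
  (cond : (Fin n →₀ ℕ) × (Fin n →₀ ℕ) → Prop)

def RepE (h : MvPolynomial (Fin n) ℂ) : Prop :=
  ∃ (A : Finset ((Fin n →₀ ℕ) × (Fin n →₀ ℕ))) (c : (Fin n →₀ ℕ) × (Fin n →₀ ℕ) → ℂ),
    (∀ p ∈ A, cond p) ∧ ∑ p ∈ A, MvPolynomial.monomial p.1 (c p) * pdPoly (⇑p.2) g = h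

variable {g cond}

lemma RepE.zero : RepE g cond 0 := ⟨∅, fun _ => 0, by simp, by simp⟩

lemma RepE.add {h1 h2 : MvPolynomial (Fin n) ℂ} (r1 : RepE g cond h1) (r2 : RepE g cond h2) :
    RepE g cond (h1 + h2) := by
  obtain ⟨A1, c1, hc1, hs1⟩ := r1
  obtain ⟨A2, c2, hc2, hs2⟩ := r2
  refine ⟨A1 ∪ A2, fun p => (if p ∈ A1 then c1 p else 0) + (if p ∈ A2 then c2 p else 0),
    ?_, ?_⟩
  · intro p hp
    rcases Finset.mem_union.mp hp with h | h
    · exact hc1 p h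
    · exact hc2 p h
  · have key : ∀ (A : Finset ((Fin n →₀ ℕ) × (Fin n →₀ ℕ)))
        (c : (Fin n →₀ ℕ) × (Fin n →₀ ℕ) → ℂ), A ⊆ A1 ∪ A2 →
        ∑ p ∈ A1 ∪ A2, MvPolynomial.monomial p.1 (if p ∈ A then c p else 0) *
          pdPoly (⇑p.2) g
        = ∑ p ∈ A, MvPolynomial.monomial p.1 (c p) * pdPoly (⇑p.2) g := by
      intro A c hA
      rw [← Finset.sum_subset hA (f := fun p =>
        MvPolynomial.monomial p.1 (if p ∈ A then c p else 0) * pdPoly (⇑p.2) g)]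
      · apply Finset.sum_congr rfl
        intro p hp
        rw [if_pos hp]
      · intro p _ hp
        rw [if_neg hp]
        simp
    calc ∑ p ∈ A1 ∪ A2, MvPolynomial.monomial p.1
          ((if p ∈ A1 then c1 p else 0) + (if p ∈ A2 then c2 p else 0)) * pdPoly (⇑p.2) g
        = ∑ p ∈ A1 ∪ A2, (MvPolynomial.monomial p.1 (if p ∈ A1 then c1 p else 0) *
            pdPoly (⇑p.2) g +
          MvPolynomial.monomial p.1 (if p ∈ A2 then c2 p else 0) * pdPoly (⇑p.2) g) := by
          apply Finset.sum_congr rfl; intro p _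
          rw [map_add, add_mul]
      _ = h1 + h2 := by
          rw [Finset.sum_add_distrib, key A1 c1 Finset.subset_union_left,
            key A2 c2 Finset.subset_union_right, hs1, hs2]

lemma RepE.smul {h : MvPolynomial (Fin n) ℂ} (z : ℂ) (r : RepE g cond h) :
    RepE g cond (z • h) := by
  obtain ⟨A, c, hc, hs⟩ := r
  refine ⟨A, fun p => z * c p, hc, ?_⟩
  rw [← hs, Finset.smul_sum]
  apply Finset.sum_congr rfl
  intro p _
  simp only []
  rw [← smul_mul_assoc, ← map_smul, smul_eq_mul]

lemma RepE.neg {h : MvPolynomial (Fin n) ℂ} (r : RepE g cond h) : RepE g cond (-h) := by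
  have := r.smul (-1)
  rwa [neg_one_smul] at this

lemma RepE.sub {h1 h2 : MvPolynomial (Fin n) ℂ} (r1 : RepE g cond h1) (r2 : RepE g cond h2) :
    RepE g cond (h1 - h2) := by
  rw [sub_eq_add_neg]; exact r1.add r2.neg

lemma RepE.sum {ι : Type*} {s : Finset ι} {F : ι → MvPolynomial (Fin n) ℂ}
    (h : ∀ x ∈ s, RepE g cond (F x)) : RepE g cond (∑ x ∈ s, F x) := by
  classical
  induction s using Finset.induction_on with
  | empty => simpa using RepE.zero
  | insert _ _ hx ih =>
    rw [Finset.sum_insert hx]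
    exact (h _ (Finset.mem_insert_self _ _)).add
      (ih fun x hxs => h x (Finset.mem_insert_of_mem hxs))

lemma RepE.gen {γ β : Fin n →₀ ℕ} (z : ℂ) (hc : cond (γ, β)) :
    RepE g cond (MvPolynomial.monomial γ z * pdPoly (⇑β) g) :=
  ⟨{(γ, β)}, fun _ => z, by simpa using hc, by simp⟩

end RepE

section Wt
variable {n : ℕ} (ω : Fin n → ℝ)

def wt (γ : Fin n →₀ ℕ) : ℝ := ∑ k, (γ k : ℝ) * ω k

lemma wt_add (a b : Fin n →₀ ℕ) : wt ω (a + b) = wt ω a + wt ω b := by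
  rw [wt, wt, wt, ← Finset.sum_add_distrib]
  apply Finset.sum_congr rfl
  intro k _
  rw [Finsupp.add_apply]
  push_cast
  ring

lemma wt_single (i : Fin n) (b : ℕ) : wt ω (Finsupp.single i b) = (b : ℝ) * ω i := by
  rw [wt, Finset.sum_eq_single i]
  · rw [Finsupp.single_eq_same]
  · intro k _ hk
    rw [Finsupp.single_eq_of_ne' (Ne.symm hk)]
    simp
  · simp

lemma wt_smul (k : ℕ) (u : Fin n →₀ ℕ) : wt ω (k • u) = (k : ℝ) * wt ω u := by
  induction k with
  | zero => simp [wt]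
  | succ k ih =>
    rw [succ_nsmul, wt_add, ih]
    push_cast
    ring

end Wt

lemma ordW_eq_sInf_wt {n : ℕ} (f : MvPolynomial (Fin n) ℂ) (ω : Fin n → ℝ) :
    ordW f ω = sInf (wt ω '' ↑f.support) := rfl

lemma ordW_le {n : ℕ} {f : MvPolynomial (Fin n) ℂ} (ω : Fin n → ℝ) {γ : Fin n →₀ ℕ}
    (hγ : γ ∈ f.support) : ordW f ω ≤ wt ω γ := by
  rw [ordW_eq_sInf_wt]
  exact csInf_le ((f.support.finite_toSet.image _).bddBelow)
    (Set.mem_image_of_mem _ (by exact_mod_cast hγ))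

lemma exists_ordW {n : ℕ} {f : MvPolynomial (Fin n) ℂ} (hf : f ≠ 0) (ω : Fin n → ℝ) :
    ∃ γ ∈ f.support, wt ω γ = ordW f ω := by
  have hne : (wt ω '' ↑f.support).Nonempty := by
    exact Set.Nonempty.image _ (Finset.coe_nonempty.mpr (MvPolynomial.support_nonempty.mpr hf))
  have := Set.Nonempty.csInf_mem hne (f.support.finite_toSet.image _)
  rw [← ordW_eq_sInf_wt] at this
  obtain ⟨γ, hγ, hw⟩ := this
  exact ⟨γ, by exact_mod_cast hγ, hw⟩

lemma pow_face {n : ℕ} (f : MvPolynomial (Fin n) ℂ) (ω : Fin n → ℝ) (i : Fin n) (lam : ℕ)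
    (m : ℝ) (u : Fin n →₀ ℕ)
    (hm_le : ∀ γ ∈ f.support, m ≤ wt ω γ)
    (hbound : ∀ γ ∈ f.support, wt ω γ = m → γ i ≤ lam)
    (hu : u ∈ f.support) (hum : wt ω u = m)
    (humax : ∀ v ∈ f.support, wt ω v = m → toLex v ≤ toLex u) :
    ∀ ℓ : ℕ, (MvPolynomial.coeff (ℓ • u) (f ^ ℓ) = (MvPolynomial.coeff u f) ^ ℓ) ∧
      ∀ δ, MvPolynomial.coeff δ (f ^ ℓ) ≠ 0 →
        ((ℓ : ℝ) * m ≤ wt ω δ ∧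
          (wt ω δ = (ℓ : ℝ) * m → toLex δ ≤ toLex (ℓ • u) ∧ δ i ≤ ℓ * lam)) := by
  intro ℓ
  induction ℓ with
  | zero =>
    constructor
    · simp
    · intro δ hδ
      rw [pow_zero] at hδ
      have hδ0 : δ = 0 := by
        by_contra hne
        rw [MvPolynomial.coeff_one, if_neg (Ne.symm hne)] at hδ
        exact hδ rfl
      subst hδ0
      simp [wt]
  | succ ℓ ih =>
    obtain ⟨ihc, ihw⟩ := ih
    have hsplit : ∀ δ (x : (Fin n →₀ ℕ) × (Fin n →₀ ℕ)), x.1 + x.2 = δ →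
        MvPolynomial.coeff x.1 (f ^ ℓ) ≠ 0 → MvPolynomial.coeff x.2 f ≠ 0 →
        ((ℓ + 1 : ℝ) * m ≤ wt ω δ ∧
          (wt ω δ = (ℓ + 1 : ℝ) * m →
            (wt ω x.1 = (ℓ : ℝ) * m ∧ wt ω x.2 = m))) := by
      intro δ x hx h1 h2
      have hw1 := (ihw x.1 h1).1
      have hw2 := hm_le x.2 (by rwa [MvPolynomial.mem_support_iff])
      have hwδ : wt ω δ = wt ω x.1 + wt ω x.2 := by rw [← hx, wt_add]
      constructor
      · rw [hwδ]; push_cast; linarith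
      · intro he
        rw [hwδ] at he
        constructor <;> [skip; skip] <;> push_cast at he <;> linarith
    constructor
    · -- coefficient of (ℓ+1) • u
      rw [pow_succ, MvPolynomial.coeff_mul]
      have hmem : ((ℓ • u : Fin n →₀ ℕ), u) ∈ Finset.HasAntidiagonal.antidiagonal ((ℓ + 1) • u) := by
        rw [Finset.HasAntidiagonal.mem_antidiagonal, succ_nsmul]
      rw [Finset.sum_eq_single_of_mem _ hmem]
      · rw [ihc, pow_succ]
      · intro x hx hxne
        by_contra hprod
        have h1 : MvPolynomial.coeff x.1 (f ^ ℓ) ≠ 0 := fun h => hprod (by rw [h, zero_mul])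
        have h2 : MvPolynomial.coeff x.2 f ≠ 0 := fun h => hprod (by rw [h, mul_zero])
        have hxsum : x.1 + x.2 = (ℓ + 1) • u := Finset.HasAntidiagonal.mem_antidiagonal.mp hx
        have hwu : wt ω ((ℓ + 1) • u) = (ℓ + 1 : ℝ) * m := by
          rw [wt_smul, hum]; push_cast; ring
        obtain ⟨_, heq⟩ := hsplit _ x hxsum h1 h2
        obtain ⟨he1, he2⟩ := heq hwu
        have hl1 : toLex x.1 ≤ toLex (ℓ • u) := ((ihw x.1 h1).2 he1).1
        have hl2 : toLex x.2 ≤ toLex u :=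
          humax x.2 (by rwa [MvPolynomial.mem_support_iff]) he2
        have hne : x.1 ≠ ℓ • u ∨ x.2 ≠ u := by
          by_contra hc
          push_neg at hc
          exact hxne (Prod.ext hc.1 hc.2)
        have hlt : toLex (x.1 + x.2) < toLex ((ℓ + 1) • u) := by
          rw [toLex_add, succ_nsmul, toLex_add]
          rcases hne with h | h
          · exact add_lt_add_of_lt_of_le
              (lt_of_le_of_ne hl1 (fun hh => h (toLex.injective hh))) hl2
          · exact add_lt_add_of_le_of_lt hl1
              (lt_of_le_of_ne hl2 (fun hh => h (toLex.injective hh)))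
        rw [hxsum] at hlt
        exact absurd hlt (lt_irrefl _)
    · -- weight bounds
      intro δ hδ
      rw [pow_succ, MvPolynomial.coeff_mul] at hδ
      obtain ⟨x, hx, hxne⟩ := Finset.exists_ne_zero_of_sum_ne_zero hδ
      have h1 : MvPolynomial.coeff x.1 (f ^ ℓ) ≠ 0 := fun h => hxne (by rw [h, zero_mul])
      have h2 : MvPolynomial.coeff x.2 f ≠ 0 := fun h => hxne (by rw [h, mul_zero])
      have hxsum : x.1 + x.2 = δ := Finset.HasAntidiagonal.mem_antidiagonal.mp hx
      obtain ⟨hge, heq⟩ := hsplit δ x hxsum h1 h2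
      refine ⟨by push_cast; push_cast at hge; linarith, ?_⟩
      intro he
      obtain ⟨he1, he2⟩ := heq (by push_cast; push_cast at he; linarith)
      have hl1 : toLex x.1 ≤ toLex (ℓ • u) := ((ihw x.1 h1).2 he1).1
      have hl2 : toLex x.2 ≤ toLex u :=
        humax x.2 (by rwa [MvPolynomial.mem_support_iff]) he2
      have hb1 : x.1 i ≤ ℓ * lam := ((ihw x.1 h1).2 he1).2
      have hb2 : x.2 i ≤ lam := hbound x.2 (by rwa [MvPolynomial.mem_support_iff]) he2
      constructor
      · rw [← hxsum, toLex_add, succ_nsmul, toLex_add]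
        exact add_le_add hl1 hl2
      · rw [← hxsum, Finsupp.add_apply]
        calc x.1 i + x.2 i ≤ ℓ * lam + lam := add_le_add hb1 hb2
        _ = (ℓ + 1) * lam := by ring

lemma coeff_pdPoly_ne_zero_iff {n : ℕ} (β γ : Fin n →₀ ℕ) (f : MvPolynomial (Fin n) ℂ) :
    MvPolynomial.coeff γ (pdPoly (⇑β) f) ≠ 0 ↔ MvPolynomial.coeff (γ + β) f ≠ 0 := by
  rw [coeff_pdPoly]
  have hprod : ((((∏ k, (γ k + β k).descFactorial (β k)) : ℕ)) : ℂ) ≠ 0 := by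
    rw [Nat.cast_ne_zero, Finset.prod_ne_zero_iff]
    intro k _
    rw [Ne, Nat.descFactorial_eq_zero_iff_lt, not_lt]
    omega
  constructor
  · intro h hc
    exact h (by rw [hc, mul_zero])
  · intro h hc
    rcases mul_eq_zero.mp hc with h1 | h1
    · exact hprod h1
    · exact h h1


lemma exists_maximal_old {α : Type*} [Preorder α] (s : Finset α) (h : s.Nonempty) :
    ∃ i ∈ s, ∀ x ∈ s, ¬ i < x := by
  obtain ⟨b, hb⟩ := Finset.exists_maximal h
  exact ⟨b, hb.1, fun x hx hlt => hlt.not_ge (hb.2 hx hlt.le)⟩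

/-- with `λᵢ = max{γᵢ : γ in the face of `Γ(f)` determined by ω}`, there is an
operator `Q = ∂_i^{ℓλᵢ+1} + (lower (−ω,ω)-order terms)` annihilating `f^ℓ`. -/
theorem stmt9 (n : ℕ) (f : MvPolynomial (Fin n) ℂ) (hf : f ≠ 0) (ℓ : ℕ)
    (ω : Fin n → ℝ) (hω : ω ≠ 0) (i : Fin n) (lam : ℕ)
    (hlam : lam =
      (f.support.filter (fun γ => ∑ k, (γ k : ℝ) * ω k = ordW f ω)).sup (fun γ => γ i)) :
    ∃ (A : Finset ((Fin n →₀ ℕ) × (Fin n →₀ ℕ))) (c : (Fin n →₀ ℕ) × (Fin n →₀ ℕ) → ℂ),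
      (∀ p ∈ A, (∑ k, ω k * p.2 k) - (∑ k, ω k * p.1 k) < ((ℓ * lam + 1 : ℕ) : ℝ) * ω i) ∧
      pdPoly (Pi.single i (ℓ * lam + 1)) (f ^ ℓ) +
        ∑ p ∈ A, MvPolynomial.monomial p.1 (c p) * pdPoly (⇑p.2) (f ^ ℓ) = 0 := by
  classical
  set g : MvPolynomial (Fin n) ℂ := f ^ ℓ with hg
  have hgne : g ≠ 0 := pow_ne_zero _ hf
  set m : ℝ := ordW f ω with hm
  set mg : ℝ := ordW g ω with hmg
  set Lr : ℝ := ((ℓ * lam + 1 : ℕ) : ℝ) with hLr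
  set cond : (Fin n →₀ ℕ) × (Fin n →₀ ℕ) → Prop :=
    fun p => (∑ k, ω k * p.2 k) - (∑ k, ω k * p.1 k) < Lr * ω i with hcond
  have condW : ∀ α β : Fin n →₀ ℕ, wt ω β - wt ω α < Lr * ω i → cond (α, β) := by
    intro α β h
    have e : ∀ γ : Fin n →₀ ℕ, (∑ k, ω k * γ k) = wt ω γ := by
      intro γ
      apply Finset.sum_congr rfl
      intro k _
      ring
    rw [hcond]
    simp only [e]
    exact h
  -- facts about f
  have hm_le : ∀ γ ∈ f.support, m ≤ wt ω γ := fun γ hγ => ordW_le ω hγ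
  have hbound : ∀ γ ∈ f.support, wt ω γ = m → γ i ≤ lam := by
    intro γ hγ hw
    rw [hlam]
    exact Finset.le_sup (f := fun γ : Fin n →₀ ℕ => γ i)
      (Finset.mem_filter.mpr ⟨hγ, hw⟩)
  obtain ⟨u, hu, humax⟩ := Finset.exists_max_image
    (f.support.filter (fun γ => wt ω γ = m)) toLex (by
      obtain ⟨γ, hγ, hw⟩ := exists_ordW hf ω
      exact ⟨γ, Finset.mem_filter.mpr ⟨hγ, hw⟩⟩)
  have huS : u ∈ f.support := (Finset.mem_filter.mp hu).1
  have hum : wt ω u = m := (Finset.mem_filter.mp hu).2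
  have humax' : ∀ v ∈ f.support, wt ω v = m → toLex v ≤ toLex u := fun v hv hw =>
    humax v (Finset.mem_filter.mpr ⟨hv, hw⟩)
  obtain ⟨ihc, ihw⟩ := pow_face f ω i lam m u hm_le hbound huS hum humax' ℓ
  -- mg = ℓ * m
  have hluS : (ℓ • u) ∈ g.support := by
    rw [MvPolynomial.mem_support_iff, hg, ihc]
    exact pow_ne_zero _ (MvPolynomial.mem_support_iff.mp huS)
  have hmg_eq : mg = (ℓ : ℝ) * m := by
    apply le_antisymm
    · have := ordW_le ω hluS
      rwa [wt_smul, hum] at this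
    · obtain ⟨γ, hγ, hw⟩ := exists_ordW hgne ω
      have := (ihw γ (MvPolynomial.mem_support_iff.mp hγ)).1
      rw [hw] at this
      exact this
  have hNeed1 : ∀ δ ∈ g.support, wt ω δ = mg → δ i ≤ ℓ * lam := by
    intro δ hδ hw
    exact ((ihw δ (MvPolynomial.mem_support_iff.mp hδ)).2 (hw.trans hmg_eq)).2
  have hmg_le : ∀ δ ∈ g.support, mg ≤ wt ω δ := fun δ hδ => ordW_le ω hδ
  -- β1 : maximal element of the support of g
  obtain ⟨β1, hβ1S, hβ1max⟩ := exists_maximal_old g.support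
    (MvPolynomial.support_nonempty.mpr hgne)
  set C1 : ℂ := MvPolynomial.coeff 0 (pdPoly (⇑β1) g) with hC1
  have hD1 : pdPoly (⇑β1) g = MvPolynomial.C C1 := by
    apply MvPolynomial.ext
    intro ε
    rw [MvPolynomial.coeff_C]
    by_cases hε : ε = 0
    · rw [hε, if_pos rfl, hC1]
    · rw [if_neg (Ne.symm hε)]
      by_contra hne
      have h2 := (coeff_pdPoly_ne_zero_iff β1 ε g).mp hne
      have hmem : ε + β1 ∈ g.support := MvPolynomial.mem_support_iff.mpr h2
      apply hβ1max _ hmem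
      apply lt_of_le_of_ne (self_le_add_left β1 ε)
      intro hc
      apply hε
      have h0 := congrArg (fun x => x - β1) hc
      symm
      simpa using h0
  have hC1ne : C1 ≠ 0 := by
    show MvPolynomial.coeff 0 (pdPoly (⇑β1) g) ≠ 0
    exact (coeff_pdPoly_ne_zero_iff β1 0 g).mpr
      (by rw [zero_add]; exact MvPolynomial.mem_support_iff.mp hβ1S)
  set W1 : ℝ := wt ω β1 with hW1
  -- β0 : maximal element of the face of g
  obtain ⟨β0, hβ0mem, hβ0max⟩ := exists_maximal_old
    (g.support.filter (fun δ => wt ω δ = mg)) (by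
      obtain ⟨γ, hγ, hw⟩ := exists_ordW hgne ω
      exact ⟨γ, Finset.mem_filter.mpr ⟨hγ, hw⟩⟩)
  have hβ0S : β0 ∈ g.support := (Finset.mem_filter.mp hβ0mem).1
  have hβ0m : wt ω β0 = mg := (Finset.mem_filter.mp hβ0mem).2
  set D0 : MvPolynomial (Fin n) ℂ := pdPoly (⇑β0) g with hD0
  set C0 : ℂ := MvPolynomial.coeff 0 D0 with hC0
  have hC0ne : C0 ≠ 0 := by
    show MvPolynomial.coeff 0 (pdPoly (⇑β0) g) ≠ 0
    exact (coeff_pdPoly_ne_zero_iff β0 0 g).mpr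
      (by rw [zero_add]; exact MvPolynomial.mem_support_iff.mp hβ0S)
  set g' : MvPolynomial (Fin n) ℂ := D0 - MvPolynomial.C C0 with hg'
  have hg'supp : ∀ ε ∈ g'.support, ε ≠ 0 ∧ 0 < wt ω ε := by
    intro ε hε
    rw [MvPolynomial.mem_support_iff, hg', MvPolynomial.coeff_sub,
      MvPolynomial.coeff_C] at hε
    have hεne : ε ≠ 0 := by
      intro hc
      rw [hc, if_pos rfl, hC0, sub_self] at hε
      exact hε rfl
    rw [if_neg (Ne.symm hεne), sub_zero] at hε
    refine ⟨hεne, ?_⟩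
    have h2 : ε + β0 ∈ g.support :=
      MvPolynomial.mem_support_iff.mpr ((coeff_pdPoly_ne_zero_iff β0 ε g).mp hε)
    have hlt : wt ω (ε + β0) ≠ mg := by
      intro hc
      apply hβ0max _ (Finset.mem_filter.mpr ⟨h2, hc⟩)
      apply lt_of_le_of_ne (self_le_add_left β0 ε)
      intro hcc
      apply hεne
      have h0 := congrArg (fun x => x - β0) hcc
      symm
      simpa using h0
    have hge := hmg_le _ h2
    have : wt ω (ε + β0) = wt ω ε + wt ω β0 := wt_add ω ε β0
    rw [this, hβ0m] at hge hlt
    have : mg < wt ω ε + mg := lt_of_le_of_ne hge (Ne.symm hlt)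
    linarith
  set cmin : ℝ := if h : g'.support.Nonempty then g'.support.inf' h (wt ω) else 1
    with hcmin
  have hcmin_pos : 0 < cmin := by
    rw [hcmin]
    split
    · rw [Finset.lt_inf'_iff]
      intro ε hε
      exact (hg'supp ε hε).2
    · exact one_pos
  have hcmin_le : ∀ ε ∈ g'.support, cmin ≤ wt ω ε := by
    intro ε hε
    rw [hcmin, dif_pos ⟨ε, hε⟩]
    exact Finset.inf'_le _ hε
  -- main induction
  have main : ∀ N : ℕ, ∀ γ : Fin n →₀ ℕ, ∀ z : ℂ,
      mg - Lr * ω i < wt ω γ → W1 - Lr * ω i < wt ω γ + N * cmin →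
      RepE g cond (MvPolynomial.monomial γ z) := by
    intro N
    induction N with
    | zero =>
      intro γ z h1 h2
      rw [Nat.cast_zero, zero_mul, add_zero] at h2
      have : MvPolynomial.monomial γ z =
          MvPolynomial.monomial γ (z / C1) * pdPoly (⇑β1) g := by
        rw [hD1, mul_comm, MvPolynomial.C_mul_monomial, mul_div_cancel₀ _ hC1ne]
      rw [this]
      exact RepE.gen _ (condW _ _ (by rw [← hW1] at *; linarith))
    | succ N ih =>
      intro γ z h1 h2
      by_cases hcase : W1 - Lr * ω i < wt ω γ
      · have : MvPolynomial.monomial γ z =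
            MvPolynomial.monomial γ (z / C1) * pdPoly (⇑β1) g := by
          rw [hD1, mul_comm, MvPolynomial.C_mul_monomial, mul_div_cancel₀ _ hC1ne]
        rw [this]
        exact RepE.gen _ (condW _ _ (by linarith))
      · have hkey : MvPolynomial.monomial γ z =
            MvPolynomial.monomial γ (z / C0) * D0 -
            ∑ ε ∈ g'.support, MvPolynomial.monomial (γ + ε) ((z / C0) * MvPolynomial.coeff ε g') := by
          have hD0split : D0 = MvPolynomial.C C0 + g' := by rw [hg']; ring
          rw [hD0split, mul_add]
          have e1 : MvPolynomial.monomial γ (z / C0) * MvPolynomial.C C0 =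
              MvPolynomial.monomial γ z := by
            rw [mul_comm, MvPolynomial.C_mul_monomial, mul_div_cancel₀ _ hC0ne]
          have e2 : MvPolynomial.monomial γ (z / C0) * g' =
              ∑ ε ∈ g'.support, MvPolynomial.monomial (γ + ε)
                ((z / C0) * MvPolynomial.coeff ε g') := by
            conv_lhs => rw [MvPolynomial.as_sum g']
            rw [Finset.mul_sum]
            apply Finset.sum_congr rfl
            intro ε _
            rw [MvPolynomial.monomial_mul]
          rw [e1, e2]
          ring
        rw [hkey]
        apply RepE.sub
        · exact RepE.gen _ (condW _ _ (by rw [hβ0m]; linarith))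
        · apply RepE.sum
          intro ε hε
          apply ih
          · rw [wt_add]
            have := (hg'supp ε hε).2
            linarith
          · rw [wt_add]
            have hc := hcmin_le ε hε
            push_cast at h2 ⊢
            linarith
  -- conclusion
  set T : MvPolynomial (Fin n) ℂ := pdPoly (Pi.single i (ℓ * lam + 1)) g with hT
  have hTsingle : T = pdPoly (⇑(Finsupp.single i (ℓ * lam + 1))) g := by
    rw [hT, Finsupp.single_eq_pi_single]
  have hRepT : RepE g cond (-T) := by
    have : -T = ∑ γ ∈ T.support, MvPolynomial.monomial γ (-(MvPolynomial.coeff γ T)) := by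
      conv_lhs => rw [MvPolynomial.as_sum T]
      rw [← Finset.sum_neg_distrib]
      apply Finset.sum_congr rfl
      intro γ _
      rw [map_neg]
    rw [this]
    apply RepE.sum
    intro γ hγ
    have hγc : MvPolynomial.coeff (γ + Finsupp.single i (ℓ * lam + 1)) g ≠ 0 := by
      rw [← coeff_pdPoly_ne_zero_iff, ← hTsingle]
      exact MvPolynomial.mem_support_iff.mp hγ
    set δ : Fin n →₀ ℕ := γ + Finsupp.single i (ℓ * lam + 1) with hδ
    have hδS : δ ∈ g.support := MvPolynomial.mem_support_iff.mpr hγc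
    have hδi : ℓ * lam < δ i := by
      rw [hδ, Finsupp.add_apply, Finsupp.single_eq_same]
      omega
    have hδw : mg < wt ω δ := by
      apply lt_of_le_of_ne (hmg_le δ hδS)
      intro hc
      exact absurd (hNeed1 δ hδS hc.symm) (by omega)
    have h1 : mg - Lr * ω i < wt ω γ := by
      have : wt ω δ = wt ω γ + Lr * ω i := by
        rw [hδ, wt_add, wt_single, hLr]
      linarith
    obtain ⟨N, hN⟩ := exists_nat_gt ((W1 - Lr * ω i - wt ω γ) / cmin)
    have h2 : W1 - Lr * ω i < wt ω γ + N * cmin := by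
      rw [div_lt_iff₀ hcmin_pos] at hN
      linarith
    exact main N γ _ h1 h2
  obtain ⟨A, c, hA, hsum⟩ := hRepT
  exact ⟨A, c, hA, by rw [hsum]; simp⟩
end

section
/- Let f ∈ ℂ[x₁,…,xₙ] be a nonzero polynomial, ω ∈ ℝⁿ, and let Q = Σ_{(α,β)} c_{αβ} x^α ∂^β be a nonzero polynomial-coefficient differential operator. Set M = 1 + max{|β| : c_{αβ} ≠ 0}. Then there exists a polynomial g ∈ ℂ[x₁,…,xₙ] such that Q • (1/f) = g/f^M on {x ∈ ℝⁿ : f(x) ≠ 0}, and such that either g = 0 or max{−⟨ω,γ⟩ : γ ∈ Supp(g)} ≤ max{⟨ω,β⟩ − ⟨ω,α⟩ : c_{αβ} ≠ 0} + (M−1)·max{−⟨ω,γ⟩ : γ ∈ Supp(f)}, i.e. deg_{−ω}(g) ≤ deg_{(−ω,ω)}(Q) + (M−1)·deg_{−ω}(f). -/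
open MvPolynomial
open scoped Classical Pointwise

namespace S12b
variable {n : ℕ} (ω : Fin n → ℝ)

noncomputable def w (γ : Fin n →₀ ℕ) : ℝ := -(∑ i, ω i * (γ i : ℝ))

lemma w_add (a b : Fin n →₀ ℕ) : w ω (a + b) = w ω a + w ω b := by
  simp only [w, Finsupp.add_apply]
  push_cast
  rw [← neg_add, ← Finset.sum_add_distrib]
  congr 1
  congr 1
  exact funext fun j => by ring

lemma supp_mul {p q : MvPolynomial (Fin n) ℂ} {Bp Bq : ℝ}
    (hp : ∀ γ ∈ p.support, w ω γ ≤ Bp) (hq : ∀ γ ∈ q.support, w ω γ ≤ Bq) :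
    ∀ γ ∈ (p * q).support, w ω γ ≤ Bp + Bq := by
  intro γ hγ
  have := MvPolynomial.support_mul p q hγ
  rw [Finset.mem_add] at this
  obtain ⟨a, ha, b, hb, rfl⟩ := this
  rw [w_add]
  exact add_le_add (hp a ha) (hq b hb)

lemma supp_pow {p : MvPolynomial (Fin n) ℂ} {B : ℝ}
    (hp : ∀ γ ∈ p.support, w ω γ ≤ B) :
    ∀ k : ℕ, ∀ γ ∈ (p ^ k).support, w ω γ ≤ k * B := by
  intro k
  induction k with
  | zero =>
    intro γ hγ
    rw [pow_zero] at hγ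
    have : γ = 0 := by
      by_contra hne
      have := MvPolynomial.mem_support_iff.mp hγ
      rw [MvPolynomial.coeff_one] at this
      simp [Ne.symm hne] at this
    subst this
    simp [w]
  | succ m ih =>
    intro γ hγ
    rw [pow_succ] at hγ
    have := supp_mul ω ih hp γ hγ
    calc w ω γ ≤ m * B + B := this
    _ = (m + 1 : ℕ) * B := by push_cast; ring

lemma supp_pderiv {p : MvPolynomial (Fin n) ℂ} {B : ℝ} (i : Fin n)
    (hp : ∀ γ ∈ p.support, w ω γ ≤ B) :
    ∀ δ ∈ (pderiv i p).support, w ω δ ≤ B + ω i := by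
  intro δ hδ
  have hcoeff : MvPolynomial.coeff δ (pderiv i p) ≠ 0 := MvPolynomial.mem_support_iff.mp hδ
  have hrep : pderiv i p = ∑ γ ∈ p.support,
      monomial (γ - Finsupp.single i 1) (MvPolynomial.coeff γ p * γ i) := by
    conv_lhs => rw [MvPolynomial.as_sum p]
    rw [map_sum]
    apply Finset.sum_congr rfl
    intro γ _
    rw [pderiv_monomial]
  rw [hrep, MvPolynomial.coeff_sum] at hcoeff
  obtain ⟨γ, hγ, hne⟩ := Finset.exists_ne_zero_of_sum_ne_zero hcoeff
  rw [MvPolynomial.coeff_monomial] at hne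
  split_ifs at hne with heq
  · -- δ = γ - single i 1, and coeff γ p * γ i ≠ 0 so γ i ≥ 1
    have hγi : γ i ≠ 0 := by
      intro h0
      apply hne
      rw [h0]
      simp
    have hle : Finsupp.single i 1 ≤ γ := by
      rw [Finsupp.single_le_iff]
      omega
    have hδeq : δ = γ - Finsupp.single i 1 := heq.symm
    have hγδ : γ = δ + Finsupp.single i 1 := by
      rw [hδeq, tsub_add_cancel_of_le hle]
    have hws : w ω (Finsupp.single i 1) = -ω i := by
      simp only [w, Finsupp.single_apply]
      rw [Finset.sum_eq_single i]
      · simp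
      · intro j _ hj
        simp [Ne.symm hj]
      · simp
    have hwγ : w ω γ = w ω δ + w ω (Finsupp.single i 1) := by
      rw [hγδ, w_add]
    have hB := hp γ hγ
    rw [hws] at hwγ
    linarith
  · exact absurd rfl hne


end S12b

namespace S12
variable {n : ℕ}
open S12b

lemma evalR_eq (f : MvPolynomial (Fin n) ℂ) :
    evalR f = fun x => MvPolynomial.eval (fun i => (x i : ℂ)) f := rfl

lemma differentiable_evalR (f : MvPolynomial (Fin n) ℂ) : Differentiable ℝ (evalR f) := by
  induction f using MvPolynomial.induction_on with
  | C a =>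
    have : evalR (n := n) (C a) = fun _ => a := by funext x; simp [evalR]
    rw [this]; exact differentiable_const a
  | add p q hp hq =>
    have : evalR (p + q) = fun x => evalR p x + evalR q x := by
      funext x; simp [evalR]
    rw [this]; exact hp.add hq
  | mul_X p j hp =>
    have : evalR (p * X j) = fun x => evalR p x * ((x j : ℂ)) := by
      funext x; simp [evalR]
    rw [this]
    exact hp.mul (Complex.ofRealCLM.differentiable.comp
      ((ContinuousLinearMap.proj j : (Fin n → ℝ) →L[ℝ] ℝ).differentiable))

lemma pd_evalR (f : MvPolynomial (Fin n) ℂ) (i : Fin n) (x : Fin n → ℝ) :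
    pd i (evalR f) x = evalR (pderiv i f) x := by
  induction f using MvPolynomial.induction_on with
  | C a =>
    have h1 : evalR (n := n) (C a) = fun _ => a := by funext x; simp [evalR]
    simp [pd, h1, pderiv_C, evalR]
  | add p q hp hq =>
    have h1 : evalR (p + q) = fun x => evalR p x + evalR q x := by funext x; simp [evalR]
    have h2 : fderiv ℝ (fun x => evalR p x + evalR q x) x
        = fderiv ℝ (evalR p) x + fderiv ℝ (evalR q) x :=
      fderiv_add ((differentiable_evalR p) x) ((differentiable_evalR q) x)
    have : evalR (pderiv i (p + q)) x = evalR (pderiv i p) x + evalR (pderiv i q) x := by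
      simp [evalR, map_add]
    simp only [pd, h1, h2, this, ContinuousLinearMap.add_apply] at *
    rw [← hp, ← hq]
  | mul_X p j hp =>
    have h1 : evalR (p * X j) = fun x => evalR p x * ((x j : ℂ)) := by
      funext x; simp [evalR]
    have hXj : (fun x : Fin n → ℝ => ((x j : ℂ)))
        = (Complex.ofRealCLM.comp (ContinuousLinearMap.proj j) : (Fin n → ℝ) →L[ℝ] ℂ) := by
      funext x; simp
    have hXd : Differentiable ℝ (fun x : Fin n → ℝ => ((x j : ℂ))) := by
      rw [hXj]; exact ContinuousLinearMap.differentiable _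
    have h2 : fderiv ℝ (fun x => evalR p x * ((x j : ℂ))) x
        = evalR p x • fderiv ℝ (fun x : Fin n → ℝ => ((x j : ℂ))) x
          + (x j : ℂ) • fderiv ℝ (evalR p) x :=
      fderiv_mul ((differentiable_evalR p) x) (hXd x)
    have h3 : fderiv ℝ (fun x : Fin n → ℝ => ((x j : ℂ))) x (Pi.single i 1)
        = (((Pi.single i 1 : Fin n → ℝ) j) : ℂ) := by
      rw [hXj, ContinuousLinearMap.fderiv]; simp
    have h4 : evalR (pderiv i (p * X j)) x
        = evalR (pderiv i p) x * (x j : ℂ) + evalR p x * (((Pi.single i 1 : Fin n → ℝ) j) : ℂ) := by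
      rw [pderiv_mul]
      simp [evalR, pderiv_X]
      rcases eq_or_ne j i with h | h
      · subst h; simp
      · simp [Pi.single_eq_of_ne h]
    simp only [pd, h1, h2, h4, ContinuousLinearMap.add_apply, ContinuousLinearMap.smul_apply,
      smul_eq_mul, h3]
    rw [← hp]
    simp [pd]
    ring


lemma isOpen_ne (f : MvPolynomial (Fin n) ℂ) : IsOpen {x : Fin n → ℝ | evalR f x ≠ 0} :=
  isOpen_compl_iff.mpr (isClosed_singleton.preimage (differentiable_evalR f).continuous)
    |>.mono le_rfl |>.mono le_rfl

lemma step (f h : MvPolynomial (Fin n) ℂ) (k : ℕ) (i : Fin n)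
    (G : (Fin n → ℝ) → ℂ)
    (hG : ∀ x, evalR f x ≠ 0 → G x = evalR h x / evalR f x ^ (k + 1))
    (x : Fin n → ℝ) (hx : evalR f x ≠ 0) :
    pd i G x = evalR (pderiv i h * f - C ((k : ℂ) + 1) * (h * pderiv i f)) x
      / evalR f x ^ (k + 2) := by
  classical
  set F : MvPolynomial (Fin n) ℂ := f ^ (k + 1) with hF
  have hFx : evalR F x ≠ 0 := by
    simp only [evalR, hF, map_pow]
    exact pow_ne_zero _ hx
  -- G agrees with ψ near x
  have hev : G =ᶠ[nhds x] fun y => evalR h y * (evalR F y)⁻¹ := by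
    filter_upwards [(isOpen_ne f).mem_nhds hx] with y hy
    rw [hG y hy]
    simp only [evalR, hF, map_pow]
    rw [div_eq_mul_inv]
  have hDh := ((differentiable_evalR h) x).hasFDerivAt
  have hDF := ((differentiable_evalR F) x).hasFDerivAt
  have hinv : HasFDerivAt (fun y => (evalR F y)⁻¹)
      ((-ContinuousLinearMap.mulLeftRight ℝ ℂ (evalR F x)⁻¹ (evalR F x)⁻¹).comp
        (fderiv ℝ (evalR F) x)) x :=
    (hasFDerivAt_inv' hFx).comp x hDF
  have hmul := hDh.mul hinv
  have hfd : fderiv ℝ G x = fderiv ℝ (fun y => evalR h y * (evalR F y)⁻¹) x :=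
    hev.fderiv_eq
  have hval : pd i G x
      = evalR h x * (-((evalR F x)⁻¹ * (evalR (pderiv i F) x) * (evalR F x)⁻¹))
        + (evalR F x)⁻¹ * evalR (pderiv i h) x := by
    rw [pd, hfd, HasFDerivAt.fderiv (f := fun y => evalR h y * (evalR F y)⁻¹) hmul]
    simp only [ContinuousLinearMap.add_apply, ContinuousLinearMap.smul_apply, smul_eq_mul,
      ContinuousLinearMap.comp_apply, ContinuousLinearMap.neg_apply,
      ContinuousLinearMap.mulLeftRight_apply]
    rw [show (fderiv ℝ (evalR F) x) (Pi.single i 1) = evalR (pderiv i F) x from pd_evalR F i x,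
      show (fderiv ℝ (evalR h) x) (Pi.single i 1) = evalR (pderiv i h) x from pd_evalR h i x]
  rw [hval]
  have hpF : pderiv i F = C ((k:ℂ)+1) * (f ^ k * pderiv i f) := by
    rw [hF, pderiv_pow]
    simp only [Nat.add_sub_cancel, Nat.cast_add, Nat.cast_one, map_add, map_one, map_natCast]
    ring
  rw [hpF]
  simp only [evalR, hF, map_mul, map_sub, map_pow, map_add, eval_C]
  have ha : (MvPolynomial.eval (fun i => ((x i : ℝ) : ℂ)) f) ≠ 0 := hx
  field_simp [ha]
  ring


def Good (f : MvPolynomial (Fin n) ℂ) (ω : Fin n → ℝ) (D : ℝ)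
    (G : (Fin n → ℝ) → ℂ) (k : ℕ) (B : ℝ) : Prop :=
  ∃ h : MvPolynomial (Fin n) ℂ,
    (∀ x, evalR f x ≠ 0 → G x = evalR h x / evalR f x ^ (k + 1)) ∧
    ∀ γ ∈ h.support, w ω γ ≤ B

lemma good_pd {f : MvPolynomial (Fin n) ℂ} {ω : Fin n → ℝ} {D : ℝ}
    (hD : ∀ δ ∈ f.support, w ω δ ≤ D)
    {G : (Fin n → ℝ) → ℂ} {k : ℕ} {B : ℝ} (hG : Good f ω D G k B) (i : Fin n) :
    Good f ω D (pd i G) (k + 1) (B + (ω i + D)) := by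
  classical
  obtain ⟨h, he, hs⟩ := hG
  refine ⟨pderiv i h * f - C ((k : ℂ) + 1) * (h * pderiv i f), fun x hx => ?_, ?_⟩
  · exact step f h k i G he x hx
  · intro γ hγ
    have hsub := MvPolynomial.support_sub (Fin n) (pderiv i h * f) (C ((k : ℂ) + 1) * (h * pderiv i f)) hγ
    rw [Finset.mem_union] at hsub
    rcases hsub with hmem | hmem
    · have := supp_mul ω (supp_pderiv ω i hs) hD γ hmem
      linarith
    · have hmem' : γ ∈ (h * pderiv i f).support := by
        have : (C ((k : ℂ) + 1) * (h * pderiv i f)) = ((k : ℂ) + 1) • (h * pderiv i f) :=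
          MvPolynomial.C_mul'
        rw [this] at hmem
        exact MvPolynomial.support_smul hmem
      have := supp_mul ω hs (supp_pderiv ω i hD) γ hmem'
      linarith

lemma good_iter {f : MvPolynomial (Fin n) ℂ} {ω : Fin n → ℝ} {D : ℝ}
    (hD : ∀ δ ∈ f.support, w ω δ ≤ D)
    {G : (Fin n → ℝ) → ℂ} {k : ℕ} {B : ℝ} (hG : Good f ω D G k B) (i : Fin n) (m : ℕ) :
    Good f ω D ((pd i)^[m] G) (k + m) (B + m * (ω i + D)) := by
  induction m with
  | zero => simpa using hG
  | succ j ih =>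
    have := good_pd hD ih i
    rw [Function.iterate_succ_apply']
    have harith : (B + j * (ω i + D)) + (ω i + D) = B + (j + 1 : ℕ) * (ω i + D) := by
      push_cast; ring
    rw [harith] at this
    have h3 : k + (j + 1) = k + j + 1 := by omega
    rw [h3]
    exact this

lemma foldr_map_comp (F : Fin n → ((Fin n → ℝ) → ℂ) → ((Fin n → ℝ) → ℂ))
    (l : List (Fin n)) (G : (Fin n → ℝ) → ℂ) :
    ((l.map F).foldr (· ∘ ·) id) G = l.foldr (fun i g => F i g) G := by
  induction l with
  | nil => rfl
  | cons a t ih => simp [List.foldr, ih, Function.comp]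

lemma good_pdIter {f : MvPolynomial (Fin n) ℂ} {ω : Fin n → ℝ} {D : ℝ}
    (hD : ∀ δ ∈ f.support, w ω δ ≤ D)
    {G : (Fin n → ℝ) → ℂ} {k : ℕ} {B : ℝ} (hG : Good f ω D G k B) (β : Fin n → ℕ) :
    Good f ω D (pdIter β G) (k + ∑ i, β i) (B + ∑ i, (β i : ℝ) * (ω i + D)) := by
  classical
  have hfold : ∀ l : List (Fin n), Good f ω D
      (l.foldr (fun i g => (pd i)^[β i] g) G) (k + (l.map β).sum)
      (B + (l.map (fun i => (β i : ℝ) * (ω i + D))).sum) := by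
    intro l
    induction l with
    | nil => simpa using hG
    | cons a t ih =>
      have := good_iter hD ih a (β a)
      simp only [List.foldr_cons, List.map_cons, List.sum_cons]
      have h1 : k + (t.map β).sum + β a = k + (β a + (t.map β).sum) := by omega
      have h2 : (B + (t.map (fun i => (β i : ℝ) * (ω i + D))).sum) + (β a : ℝ) * (ω a + D)
          = B + ((β a : ℝ) * (ω a + D) + (t.map (fun i => (β i : ℝ) * (ω i + D))).sum) := by
        ring
      rw [h1, h2] at this
      exact this
  have := hfold (List.finRange n)
  have hpd : pdIter β G = (List.finRange n).foldr (fun i g => (pd i)^[β i] g) G := by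
    unfold pdIter
    rw [List.ofFn_eq_map]
    exact foldr_map_comp _ _ _
  rw [hpd]
  have e1 : ((List.finRange n).map β).sum = ∑ i, β i := (Fin.sum_univ_def β).symm
  have e2 : ((List.finRange n).map (fun i => (β i : ℝ) * (ω i + D))).sum
      = ∑ i, (β i : ℝ) * (ω i + D) := (Fin.sum_univ_def _).symm
  rw [e1, e2] at this
  exact this

lemma key (f : MvPolynomial (Fin n) ℂ) (ω : Fin n → ℝ) (D : ℝ)
    (hD : ∀ δ ∈ f.support, w ω δ ≤ D) (β : Fin n → ℕ) :
    ∃ h : MvPolynomial (Fin n) ℂ,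
      (∀ x, evalR f x ≠ 0 →
        pdIter β (fun y => (evalR f y)⁻¹) x = evalR h x / evalR f x ^ (∑ i, β i + 1)) ∧
      ∀ γ ∈ h.support, w ω γ ≤ ∑ i, (β i : ℝ) * (ω i + D) := by
  have hbase : Good f ω D (fun y => (evalR f y)⁻¹) 0 0 := by
    refine ⟨1, fun x hx => ?_, ?_⟩
    · have h1 : evalR (1 : MvPolynomial (Fin n) ℂ) x = 1 := by simp [evalR]
      rw [h1, pow_one, one_div]
    · intro γ hγ
      have : γ = 0 := by
        by_contra hne
        have := MvPolynomial.mem_support_iff.mp hγ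
        rw [MvPolynomial.coeff_one] at this
        simp [Ne.symm hne] at this
      subst this
      simp [w]
  have := good_pdIter hD hbase β
  rw [zero_add, zero_add] at this
  obtain ⟨h, he, hs⟩ := this
  exact ⟨h, he, hs⟩


end S12

open S12 S12b in
/-- `Q • (1/f) = g / f^M` on `{f ≠ 0}` with `M = 1 + max |β|`, and
`deg_{−ω}(g) ≤ deg_{(−ω,ω)}(Q) + (M−1)·deg_{−ω}(f)` (the degree bound being expressed
as a bound on every exponent in the support of `g`). -/
theorem stmt12 (n : ℕ) (f : MvPolynomial (Fin n) ℂ) (hf : f ≠ 0) (ω : Fin n → ℝ)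
    (A : Finset ((Fin n → ℕ) × (Fin n → ℕ))) (hA : A.Nonempty)
    (c : (Fin n → ℕ) × (Fin n → ℕ) → ℂ) (hc : ∀ p ∈ A, c p ≠ 0) :
    ∃ g : MvPolynomial (Fin n) ℂ,
      (∀ x : Fin n → ℝ, evalR f x ≠ 0 →
        ∑ p ∈ A, c p * (∏ i, (x i : ℂ) ^ p.1 i) * pdIter p.2 (fun y => (evalR f y)⁻¹) x
          = evalR g x / (evalR f x) ^ (1 + A.sup (fun p => ∑ i, p.2 i))) ∧
      ∀ γ ∈ g.support,
        -(∑ i, ω i * (γ i : ℝ)) ≤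
          A.sup' hA (fun p => (∑ i, ω i * p.2 i) - (∑ i, ω i * p.1 i)) +
            ((A.sup (fun p => ∑ i, p.2 i) : ℕ) : ℝ) *
              (f.support.sup' (MvPolynomial.support_nonempty.mpr hf)
                (fun δ => -(∑ i, ω i * (δ i : ℝ)))) := by


  classical
  set D : ℝ := f.support.sup' (MvPolynomial.support_nonempty.mpr hf)
      (fun δ => -(∑ i, ω i * (δ i : ℝ))) with hDdef
  have hD : ∀ δ ∈ f.support, w ω δ ≤ D := fun δ hδ => Finset.le_sup' _ hδ
  set K : ℕ := A.sup (fun p => ∑ i, p.2 i) with hK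
  choose H h1 h2 using S12.key f ω D hD
  refine ⟨∑ p ∈ A, C (c p) * ((monomial (Finsupp.equivFunOnFinite.symm p.1) 1)
      * (H p.2 * f ^ (K - ∑ i, p.2 i))), fun x hx => ?_, ?_⟩
  · -- evaluation identity
    have hFne : evalR f x ≠ 0 := hx
    have hEval : evalR (∑ p ∈ A, C (c p) * ((monomial (Finsupp.equivFunOnFinite.symm p.1) 1)
        * (H p.2 * f ^ (K - ∑ i, p.2 i)))) x
        = ∑ p ∈ A, c p * ((∏ i, (x i : ℂ) ^ p.1 i)
            * (evalR (H p.2) x * (evalR f x) ^ (K - ∑ i, p.2 i))) := by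
      simp only [evalR, map_sum, map_mul, eval_C, eval_monomial, map_pow, one_mul]
      apply Finset.sum_congr rfl
      intro p _
      congr 2
      rw [Finsupp.prod_pow]
      apply Finset.prod_congr rfl
      intro i _
      simp
    rw [hEval, Finset.sum_div]
    apply Finset.sum_congr rfl
    intro p hp
    rw [h1 p.2 x hx]
    have hsle : (∑ i, p.2 i) ≤ K := Finset.le_sup (f := fun p => ∑ i, p.2 i) hp
    have hpow : (evalR f x) ^ (1 + K)
        = (evalR f x) ^ (∑ i, p.2 i + 1) * (evalR f x) ^ (K - ∑ i, p.2 i) := by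
      rw [← pow_add]
      congr 1
      omega
    rw [hpow]
    have h2ne : (evalR f x) ^ (∑ i, p.2 i + 1) ≠ 0 := pow_ne_zero _ hx
    have h3ne : (evalR f x) ^ (K - ∑ i, p.2 i) ≠ 0 := pow_ne_zero _ hx
    field_simp
  · -- support bound
    intro γ hγ
    have hmem := MvPolynomial.support_sum hγ
    rw [Finset.mem_biUnion] at hmem
    obtain ⟨p, hp, hγp⟩ := hmem
    -- bound the individual factors
    have t1 : ∀ δ ∈ (C (c p) : MvPolynomial (Fin n) ℂ).support, w ω δ ≤ 0 := by
      intro δ hδ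
      have := MvPolynomial.mem_support_iff.mp hδ
      rw [MvPolynomial.coeff_C] at this
      have hδ0 : δ = 0 := by
        by_contra hne
        simp [Ne.symm hne] at this
      subst hδ0
      simp [w]
    have t2 : ∀ δ ∈ (monomial (Finsupp.equivFunOnFinite.symm p.1)
        (1 : ℂ)).support, w ω δ ≤ -(∑ i, ω i * (p.1 i : ℝ)) := by
      intro δ hδ
      have := MvPolynomial.mem_support_iff.mp hδ
      rw [MvPolynomial.coeff_monomial] at this
      split_ifs at this with heq
      · subst heq
        apply le_of_eq
        simp [w]
      · exact absurd rfl this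
    have t4 := supp_pow ω hD (K - ∑ i, p.2 i)
    have t3 := supp_mul ω (h2 p.2) t4
    have t5 := supp_mul ω t2 t3
    have t6 := supp_mul ω t1 t5
    have hwγ := t6 γ hγp
    -- arithmetic
    have hBp : ∑ i, (p.2 i : ℝ) * (ω i + D)
        = (∑ i, ω i * (p.2 i : ℝ)) + ((∑ i, p.2 i : ℕ) : ℝ) * D := by
      push_cast
      rw [Finset.sum_mul, ← Finset.sum_add_distrib]
      apply Finset.sum_congr rfl
      intro i _
      ring
    have hsle : (∑ i, p.2 i) ≤ K := Finset.le_sup (f := fun p => ∑ i, p.2 i) hp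
    have hcast : ((K - ∑ i, p.2 i : ℕ) : ℝ) = (K : ℝ) - ((∑ i, p.2 i : ℕ) : ℝ) := by
      exact Nat.cast_sub hsle
    have hsup : (∑ i, ω i * (p.2 i : ℝ)) - (∑ i, ω i * (p.1 i : ℝ))
        ≤ A.sup' hA (fun p => (∑ i, ω i * p.2 i) - (∑ i, ω i * p.1 i)) :=
      Finset.le_sup' (fun p : (Fin n → ℕ) × (Fin n → ℕ) =>
        (∑ i, ω i * (p.2 i : ℝ)) - (∑ i, ω i * (p.1 i : ℝ))) hp
    have : w ω γ ≤ 0 + (-(∑ i, ω i * (p.1 i : ℝ))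
        + ((∑ i, (p.2 i : ℝ) * (ω i + D)) + ((K - ∑ i, p.2 i : ℕ) : ℝ) * D)) := hwγ
    rw [hBp, hcast] at this
    simp only [w] at this
    calc -(∑ i, ω i * (γ i : ℝ)) ≤ _ := this
    _ ≤ A.sup' hA (fun p => (∑ i, ω i * p.2 i) - (∑ i, ω i * p.1 i)) + (K : ℝ) * D := by
      linarith
end

section
/- Let f ∈ ℂ[x₁,…,xₙ] be a nonzero polynomial with f(0) = 0, and suppose the set 𝒞 = {1 ≤ i ≤ n : e_i ∈ Supp(f)} is nonempty (i.e. ord(f) = 1, where e_i is the i-th standard basis multi-index). Then there exists a polynomial-coefficient differential operator Q = Σ_{i∈𝒞} x_i ∂_i + 1 + Σ_{(α,β)∈A} c_{αβ} x^α ∂^β, with A finite and every (α,β) ∈ A satisfying |β| < |α|, such that Q • (1/f) = 0 on {x ∈ ℝⁿ : f(x) ≠ 0}. (Hence Σ_{i∈𝒞} x_i∂_i + 1 belongs to the (−e,e)-initial ideal of Ann(1/f).) -/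
open MvPolynomial
open scoped Classical Pointwise

section PdIter
variable {X Y : Type*}

lemma foldr_comp_apply (l : List ((X → Y) → (X → Y))) (φ : X → Y) :
    (l.foldr (· ∘ ·) id) φ = l.foldr (fun F a => F a) φ := by
  induction l with
  | nil => rfl
  | cons f l ih => simp [List.foldr_cons, ih, Function.comp_apply]

lemma foldr_ofFn_id : ∀ {m : ℕ} (G : Fin m → ((X → Y) → (X → Y))),
    (∀ k, G k = id) → ∀ φ : X → Y, (List.ofFn G).foldr (fun F a => F a) φ = φ := by
  intro m
  induction m with
  | zero => intro G _ φ; simp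
  | succ m ih =>
    intro G hG φ
    rw [List.ofFn_succ, List.foldr_cons, ih _ (fun k => hG k.succ) φ, hG 0]
    rfl

lemma foldr_ofFn_single : ∀ {m : ℕ} (G : Fin m → ((X → Y) → (X → Y))) (i : Fin m),
    (∀ k, k ≠ i → G k = id) → ∀ φ : X → Y,
    (List.ofFn G).foldr (fun F a => F a) φ = G i φ := by
  intro m
  induction m with
  | zero => intro _ i; exact i.elim0
  | succ m ih =>
    intro G i hG φ
    rcases Fin.eq_zero_or_eq_succ i with rfl | ⟨j, rfl⟩
    · rw [List.ofFn_succ, List.foldr_cons,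
        foldr_ofFn_id _ (fun k => hG k.succ (Fin.succ_ne_zero k)) φ]
    · rw [List.ofFn_succ, List.foldr_cons, hG 0 (Fin.succ_ne_zero j).symm,
        ih _ j (fun k hk => hG k.succ (by simpa [Fin.succ_inj] using hk)) φ]
      rfl

lemma pdIter_zero {n : ℕ} (φ : (Fin n → ℝ) → ℂ) : pdIter (0 : Fin n → ℕ) φ = φ := by
  unfold pdIter
  rw [foldr_comp_apply]
  exact foldr_ofFn_id _ (fun k => by simp) φ

lemma pdIter_single {n : ℕ} (i : Fin n) (φ : (Fin n → ℝ) → ℂ) :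
    pdIter (Pi.single i 1) φ = pd i φ := by
  unfold pdIter
  rw [foldr_comp_apply, foldr_ofFn_single _ i (fun k hk => by simp [Pi.single_eq_of_ne hk])]
  simp [Pi.single_eq_same]

end PdIter

section Analysis
variable {n : ℕ}

noncomputable def coordL (i : Fin n) : (Fin n → ℝ) →L[ℝ] ℂ :=
  Complex.ofRealCLM.comp (ContinuousLinearMap.proj i)

noncomputable def Dmap (f : MvPolynomial (Fin n) ℂ) (x : Fin n → ℝ) : (Fin n → ℝ) →L[ℝ] ℂ :=
  ∑ i, evalR (pderiv i f) x • coordL i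

lemma hasFDerivAt_evalR (f : MvPolynomial (Fin n) ℂ) :
    ∀ x, HasFDerivAt (evalR f) (Dmap f x) x := by
  induction f using MvPolynomial.induction_on with
  | C a =>
    intro x
    have h1 : evalR (n := n) (C a) = fun _ => a := funext fun y => by simp [evalR]
    have h2 : Dmap (n := n) (C a) x = 0 := by
      refine ContinuousLinearMap.ext fun v => ?_
      simp [Dmap, pderiv_C, evalR, ContinuousLinearMap.sum_apply]
    rw [h1, h2]
    exact hasFDerivAt_const a x
  | add p q hp hq =>
    intro x
    have h1 : evalR (p + q) = fun y => evalR p y + evalR q y :=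
      funext fun y => by simp [evalR]
    have h2 : Dmap (p + q) x = Dmap p x + Dmap q x := by
      refine ContinuousLinearMap.ext fun v => ?_
      simp [Dmap, evalR, map_add, ContinuousLinearMap.sum_apply, smul_eq_mul, add_mul,
        Finset.sum_add_distrib]
    rw [h1, h2]
    exact (hp x).add (hq x)
  | mul_X p i hp =>
    intro x
    have hcoord : HasFDerivAt (fun y : Fin n → ℝ => ((y i : ℝ) : ℂ)) (coordL i) x :=
      (coordL i).hasFDerivAt
    have hmul := (hp x).mul hcoord
    have h1 : evalR (p * X i) = fun y => evalR p y * ((y i : ℝ) : ℂ) :=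
      funext fun y => by simp [evalR]
    have hk : ∀ k, evalR (pderiv k (p * X i)) x
        = evalR (pderiv k p) x * (x i : ℂ) + (if k = i then evalR p x else 0) := by
      intro k
      rcases eq_or_ne k i with rfl | hki
      · simp [pderiv_mul, pderiv_X_self, evalR]; ring
      · simp [pderiv_mul, pderiv_X_of_ne hki.symm, evalR, hki]; ring
    have h2 : Dmap (p * X i) x = evalR p x • coordL i + (x i : ℂ) • Dmap p x := by
      refine ContinuousLinearMap.ext fun v => ?_
      simp only [Dmap, ContinuousLinearMap.sum_apply, ContinuousLinearMap.smul_apply,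
        ContinuousLinearMap.add_apply, smul_eq_mul]
      rw [Finset.sum_congr rfl (fun k _ => by rw [hk k])]
      have hterm : ∀ k, (evalR (pderiv k p) x * (x i : ℂ)
            + (if k = i then evalR p x else 0)) * coordL k v
          = (x i : ℂ) * (evalR (pderiv k p) x * coordL k v)
            + (if k = i then evalR p x * coordL k v else 0) := by
        intro k; split <;> ring
      rw [Finset.sum_congr rfl (fun k _ => hterm k), Finset.sum_add_distrib,
        ← Finset.mul_sum, Finset.sum_ite_eq' Finset.univ i
          (fun k => evalR p x * coordL k v), if_pos (Finset.mem_univ i)]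
      ring
    rw [h1, h2]
    exact hmul

lemma Dmap_apply_single (f : MvPolynomial (Fin n) ℂ) (x : Fin n → ℝ) (i : Fin n) :
    Dmap f x (Pi.single i 1) = evalR (pderiv i f) x := by
  have hco : ∀ k, coordL k (Pi.single i (1 : ℝ)) = if k = i then 1 else 0 := by
    intro k
    simp [coordL, Pi.single_apply, apply_ite (Complex.ofReal)]
  simp [Dmap, ContinuousLinearMap.sum_apply, ContinuousLinearMap.smul_apply, hco,
    smul_eq_mul, mul_ite, mul_one, mul_zero, Finset.sum_ite_eq']

lemma pd_evalR (f : MvPolynomial (Fin n) ℂ) (i : Fin n) (x : Fin n → ℝ) :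
    pd i (evalR f) x = evalR (pderiv i f) x := by
  unfold pd
  rw [(hasFDerivAt_evalR f x).fderiv, Dmap_apply_single]

lemma pd_inv_evalR (f : MvPolynomial (Fin n) ℂ) (i : Fin n) (x : Fin n → ℝ)
    (hx : evalR f x ≠ 0) :
    pd i (fun y => (evalR f y)⁻¹) x
      = -(evalR (pderiv i f) x * ((evalR f x) ^ 2)⁻¹) := by
  have h2 : HasFDerivAt (fun y => (evalR f y)⁻¹)
      ((-ContinuousLinearMap.mulLeftRight ℝ ℂ (evalR f x)⁻¹ (evalR f x)⁻¹).comp (Dmap f x)) x :=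
    (hasFDerivAt_inv' (𝕜 := ℝ) hx).comp x (hasFDerivAt_evalR f x)
  unfold pd
  rw [h2.fderiv]
  simp only [ContinuousLinearMap.comp_apply, ContinuousLinearMap.neg_apply,
    ContinuousLinearMap.mulLeftRight_apply, Dmap_apply_single]
  rw [sq, mul_inv]
  ring
end Analysis

section Poly
variable {n : ℕ}

lemma coeff_zero_pderiv (f : MvPolynomial (Fin n) ℂ) (j : Fin n) :
    coeff 0 (pderiv j f) = coeff (Finsupp.single j 1) f := by
  induction f using MvPolynomial.induction_on with
  | C a => simp [pderiv_C, coeff_C, Finsupp.single_eq_zero, eq_comm]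
  | add p q hp hq => simp [map_add, coeff_add, hp, hq]
  | mul_X p i hp =>
    rw [pderiv_mul, coeff_add]
    rcases eq_or_ne i j with rfl | hij
    · rw [pderiv_X_self, mul_one, coeff_mul_X', coeff_mul_X']
      simp [Finsupp.support_single_ne_zero, hp]
    · rw [pderiv_X_of_ne hij, mul_zero, coeff_mul_X', coeff_mul_X']
      simp [Finsupp.support_single_ne_zero, hij]

def OrdGE (k : ℕ) (P : MvPolynomial (Fin n) ℂ) : Prop :=
  ∀ γ ∈ P.support, k ≤ ∑ i, γ i

lemma ordGE_zero (P : MvPolynomial (Fin n) ℂ) : OrdGE 0 P := fun _ _ => Nat.zero_le _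

lemma ordGE_zero_poly (k : ℕ) : OrdGE k (0 : MvPolynomial (Fin n) ℂ) := by
  intro γ hγ; simp at hγ

lemma ordGE_mono {k l : ℕ} {P : MvPolynomial (Fin n) ℂ} (hkl : k ≤ l) (h : OrdGE l P) :
    OrdGE k P := fun γ hγ => le_trans hkl (h γ hγ)

lemma ordGE_mul {k l : ℕ} {P Q : MvPolynomial (Fin n) ℂ}
    (hP : OrdGE k P) (hQ : OrdGE l Q) : OrdGE (k + l) (P * Q) := by
  intro γ hγ
  have hm := MvPolynomial.support_mul P Q hγ
  rw [Finset.mem_add] at hm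
  obtain ⟨a, ha, b, hb, rfl⟩ := hm
  have : ∑ i, (a + b) i = (∑ i, a i) + ∑ i, b i := by
    simp [Finsupp.add_apply, Finset.sum_add_distrib]
  rw [this]
  exact add_le_add (hP a ha) (hQ b hb)

lemma ordGE_add {k : ℕ} {P Q : MvPolynomial (Fin n) ℂ}
    (hP : OrdGE k P) (hQ : OrdGE k Q) : OrdGE k (P + Q) := by
  intro γ hγ
  rcases Finset.mem_union.mp (MvPolynomial.support_add hγ) with h | h
  · exact hP γ h
  · exact hQ γ h

lemma ordGE_neg {k : ℕ} {P : MvPolynomial (Fin n) ℂ} (hP : OrdGE k P) : OrdGE k (-P) := by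
  intro γ hγ
  exact hP γ (by simpa [MvPolynomial.support_neg] using hγ)

lemma ordGE_X (i : Fin n) : OrdGE 1 (X i : MvPolynomial (Fin n) ℂ) := by
  intro γ hγ
  rw [MvPolynomial.support_X, Finset.mem_singleton] at hγ
  subst hγ
  simp [Finsupp.single_apply, Finset.sum_ite_eq']

lemma sum_eq_zero_finsupp {γ : Fin n →₀ ℕ} (h : ∑ i, γ i = 0) : γ = 0 := by
  ext i
  exact Finset.sum_eq_zero_iff.mp h i (Finset.mem_univ i)

lemma ordGE_one_of_coeff {P : MvPolynomial (Fin n) ℂ} (h0 : coeff 0 P = 0) : OrdGE 1 P := by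
  intro γ hγ
  rcases Nat.eq_zero_or_pos (∑ i, γ i) with h | h
  · exfalso
    rw [sum_eq_zero_finsupp h] at hγ
    exact (MvPolynomial.mem_support_iff.mp hγ) h0
  · exact h

lemma ordGE_two_of_coeff {P : MvPolynomial (Fin n) ℂ} (h0 : coeff 0 P = 0)
    (h1 : ∀ k, coeff (Finsupp.single k 1) P = 0) : OrdGE 2 P := by
  intro γ hγ
  by_contra hlt
  push_neg at hlt
  interval_cases hs : (∑ i, γ i)
  · rw [sum_eq_zero_finsupp hs] at hγ
    exact (MvPolynomial.mem_support_iff.mp hγ) h0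
  · -- ∑ γ = 1 : γ = single k 1 for some k
    have hne : ∃ k, γ k ≠ 0 := by
      by_contra hall
      push_neg at hall
      have : γ = 0 := by ext i; exact hall i
      rw [this] at hs
      simp at hs
    obtain ⟨k, hk⟩ := hne
    have hsplit : γ k + ∑ i ∈ Finset.univ.erase k, γ i = 1 := by
      rw [Finset.add_sum_erase _ _ (Finset.mem_univ k)]
      exact hs
    have hγk : γ k = 1 := by omega
    have hrest : ∀ i ∈ Finset.univ.erase k, γ i = 0 :=
      Finset.sum_eq_zero_iff.mp (by omega)
    have hγeq : γ = Finsupp.single k 1 := by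
      ext i
      rcases eq_or_ne i k with rfl | hik
      · simp [Finsupp.single_apply, hγk]
      · simp [Finsupp.single_apply, hik, Ne.symm hik,
          hrest i (Finset.mem_erase.mpr ⟨hik, Finset.mem_univ i⟩)]
    rw [hγeq] at hγ
    exact (MvPolynomial.mem_support_iff.mp hγ) (h1 k)
end Poly


/-- if `ord(f) = 1` (i.e. `f(0) = 0` and some `e_i ∈ Supp(f)`), then
`Σ_{i∈𝒞} x_i ∂_i + 1` is the `(−e,e)`-initial form of an operator annihilating `1/f`. -/
theorem stmt15 (n : ℕ) (f : MvPolynomial (Fin n) ℂ) (hf : f ≠ 0)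
    (h0 : MvPolynomial.coeff 0 f = 0)
    (hC : (Finset.univ.filter (fun i : Fin n => Finsupp.single i 1 ∈ f.support)).Nonempty) :
    ∃ (A : Finset ((Fin n → ℕ) × (Fin n → ℕ))) (c : (Fin n → ℕ) × (Fin n → ℕ) → ℂ),
      (∀ p ∈ A, ∑ i, p.2 i < ∑ i, p.1 i) ∧
      ∀ x : Fin n → ℝ, evalR f x ≠ 0 →
        (∑ i ∈ Finset.univ.filter (fun i : Fin n => Finsupp.single i 1 ∈ f.support),
            (x i : ℂ) * pd i (fun y => (evalR f y)⁻¹) x)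
          + (evalR f x)⁻¹
          + ∑ p ∈ A, c p * (∏ i, (x i : ℂ) ^ p.1 i) *
              pdIter p.2 (fun y => (evalR f y)⁻¹) x = 0 := by
  classical
  set 𝒞 : Finset (Fin n) := Finset.univ.filter (fun i : Fin n => Finsupp.single i 1 ∈ f.support)
    with h𝒞def
  obtain ⟨j, hj⟩ := hC
  have hjs : Finsupp.single j 1 ∈ f.support := (Finset.mem_filter.mp hj).2
  set c₀ : ℂ := coeff (Finsupp.single j 1) f with hc₀def
  have hc₀ : c₀ ≠ 0 := MvPolynomial.mem_support_iff.mp hjs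
  set hh : MvPolynomial (Fin n) ℂ := pderiv j f - C c₀ with hhdef
  set g : MvPolynomial (Fin n) ℂ := f - ∑ i ∈ 𝒞, X i * pderiv i f with hgdef
  set b₀ : MvPolynomial (Fin n) ℂ := C ((c₀ ^ 2)⁻¹) * hh ^ 2 with hb₀def
  set a : Fin n → MvPolynomial (Fin n) ℂ := fun i =>
    -(C ((c₀ ^ 2)⁻¹) * hh ^ 2 * (if i ∈ 𝒞 then X i else 0))
      + (if i = j then C ((c₀ ^ 2)⁻¹) * g * (pderiv j f - 2 * hh) else 0) with hadef
  -- order bounds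
  have hh0 : coeff 0 hh = 0 := by
    rw [hhdef]
    simp [coeff_sub, coeff_zero_pderiv, coeff_C, hc₀def]
  have hordh : OrdGE 1 hh := ordGE_one_of_coeff hh0
  have hordh2 : OrdGE 2 (hh ^ 2) := by rw [sq]; exact ordGE_mul hordh hordh
  have hg0 : coeff 0 g = 0 := by
    rw [hgdef]
    simp [coeff_sub, h0, MvPolynomial.coeff_sum, coeff_X_mul']
  have hg1 : ∀ k, coeff (Finsupp.single k 1) g = 0 := by
    intro k
    rw [hgdef]
    rw [coeff_sub, MvPolynomial.coeff_sum]
    have hterm : ∀ i, coeff (Finsupp.single k 1) (X i * pderiv i f)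
        = if i = k then coeff (Finsupp.single k 1) f else 0 := by
      intro i
      rw [coeff_X_mul']
      rcases eq_or_ne i k with rfl | hik
      · simp [Finsupp.support_single_ne_zero, coeff_zero_pderiv]
      · simp [Finsupp.support_single_ne_zero, hik]
    rw [Finset.sum_congr rfl (fun i _ => hterm i), Finset.sum_ite_eq' 𝒞 k]
    by_cases hk : k ∈ 𝒞
    · simp [hk]
    · have : Finsupp.single k 1 ∉ f.support := by
        intro hmem
        exact hk (by rw [h𝒞def]; exact Finset.mem_filter.mpr ⟨Finset.mem_univ k, hmem⟩)
      simp [hk, MvPolynomial.notMem_support_iff.mp this]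
  have hordg : OrdGE 2 g := ordGE_two_of_coeff hg0 hg1
  have hordb : OrdGE 1 b₀ := by
    rw [hb₀def]
    exact ordGE_mono (by norm_num)
      (ordGE_mul (k := 0) (ordGE_zero _) hordh2)
  have horda : ∀ i, OrdGE 2 (a i) := by
    intro i
    rw [hadef]
    simp only
    apply ordGE_add
    · apply ordGE_neg
      by_cases hi : i ∈ 𝒞
      · rw [if_pos hi]
        exact ordGE_mono (by norm_num)
          (ordGE_mul (k := 2) (ordGE_mul (k := 0) (ordGE_zero _) hordh2) (ordGE_X i))
      · rw [if_neg hi, mul_zero]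
        exact ordGE_zero_poly 2
    · by_cases hij : i = j
      · rw [if_pos hij]
        exact ordGE_mono (by norm_num)
          (ordGE_mul (l := 0) (ordGE_mul (k := 0) (ordGE_zero _) hordg) (ordGE_zero _))
      · rw [if_neg hij]
        exact ordGE_zero_poly 2
  -- the polynomial identity
  have hC2 : (C ((c₀ ^ 2)⁻¹) : MvPolynomial (Fin n) ℂ) * (C c₀) ^ 2 = 1 := by
    rw [← map_pow, ← C_mul, inv_mul_cancel₀ (pow_ne_zero 2 hc₀), C_1]
  have PI : (∑ i, a i * pderiv i f) + b₀ * f = g := by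
    have hsplit : ∀ i, a i * pderiv i f
        = -(C ((c₀ ^ 2)⁻¹) * hh ^ 2 *
              (if i ∈ 𝒞 then X i * pderiv i f else 0))
          + (if i = j then C ((c₀ ^ 2)⁻¹) * g * (pderiv j f - 2 * hh) * pderiv j f
              else 0) := by
      intro i
      rw [hadef]
      simp only
      by_cases hij : i = j
      · subst hij
        by_cases hi : i ∈ 𝒞 <;> simp [hi] <;> ring
      · by_cases hi : i ∈ 𝒞 <;> simp [hi, hij] <;> ring
    rw [Finset.sum_congr rfl (fun i _ => hsplit i), Finset.sum_add_distrib]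
    rw [Finset.sum_neg_distrib, ← Finset.mul_sum]
    rw [Finset.sum_ite_mem Finset.univ 𝒞 (fun i => X i * pderiv i f), Finset.univ_inter]
    rw [Finset.sum_ite_eq' Finset.univ j
      (fun _ => C ((c₀ ^ 2)⁻¹) * g * (pderiv j f - 2 * hh) * pderiv j f),
      if_pos (Finset.mem_univ j)]
    have hfg : ∑ i ∈ 𝒞, X i * pderiv i f = f - g := by rw [hgdef]; ring
    rw [hfg, hb₀def, hhdef]
    linear_combination g * hC2
  -- construction of A and c
  set A₀ : Finset ((Fin n → ℕ) × (Fin n → ℕ)) :=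
    b₀.support.image (fun γ : Fin n →₀ ℕ => ((γ : Fin n → ℕ), (0 : Fin n → ℕ))) with hA₀def
  set A₁ : Fin n → Finset ((Fin n → ℕ) × (Fin n → ℕ)) := fun i =>
    (a i).support.image (fun γ : Fin n →₀ ℕ => ((γ : Fin n → ℕ), (Pi.single i 1 : Fin n → ℕ))) with hA₁def
  set cc : (Fin n → ℕ) × (Fin n → ℕ) → ℂ := fun p =>
    (if p.2 = 0 then -(coeff (Finsupp.equivFunOnFinite.symm p.1) b₀) else 0)
      + ∑ i, (if p.2 = Pi.single i 1 then coeff (Finsupp.equivFunOnFinite.symm p.1) (a i)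
          else 0) with hccdef
  have hsingle_ne : ∀ i : Fin n, (Pi.single i 1 : Fin n → ℕ) ≠ 0 := by
    intro i hcon
    have := congrFun hcon i
    simp [Pi.single_eq_same] at this
  have hsingle_inj : ∀ i k : Fin n, (Pi.single i 1 : Fin n → ℕ) = Pi.single k 1 → i = k := by
    intro i k hcon
    by_contra hik
    have := congrFun hcon i
    simp [Pi.single_apply, hik] at this
  refine ⟨A₀ ∪ Finset.univ.biUnion A₁, cc, ?_, ?_⟩
  · intro p hp
    rcases Finset.mem_union.mp hp with hp0 | hp1
    · obtain ⟨γ, hγ, rfl⟩ := Finset.mem_image.mp hp0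
      have h1 := hordb γ hγ
      simpa using lt_of_lt_of_le (by norm_num) h1
    · obtain ⟨i, _, hpi⟩ := Finset.mem_biUnion.mp hp1
      obtain ⟨γ, hγ, rfl⟩ := Finset.mem_image.mp hpi
      have h1 := horda i γ hγ
      have h2 : ∑ k, (Pi.single i 1 : Fin n → ℕ) k = 1 := by
        rw [Finset.sum_pi_single' i 1 Finset.univ, if_pos (Finset.mem_univ i)]
      simpa [h2] using lt_of_lt_of_le (by norm_num) h1
  · intro x hx
    set φ : (Fin n → ℝ) → ℂ := fun y => (evalR f y)⁻¹ with hφdef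
    -- disjointness
    have hdisj : Disjoint A₀ (Finset.univ.biUnion A₁) := by
      rw [Finset.disjoint_left]
      intro p hp0 hp1
      obtain ⟨γ, _, rfl⟩ := Finset.mem_image.mp hp0
      obtain ⟨i, _, hpi⟩ := Finset.mem_biUnion.mp hp1
      obtain ⟨δ, _, heq⟩ := Finset.mem_image.mp hpi
      exact hsingle_ne i (congrArg Prod.snd heq)
    have hpair : ((Finset.univ : Finset (Fin n)) : Set (Fin n)).Pairwise
        (fun i k => Disjoint (A₁ i) (A₁ k)) := by
      intro i _ k _ hik
      rw [Finset.disjoint_left]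
      intro p hpi hpk
      obtain ⟨γ, _, rfl⟩ := Finset.mem_image.mp hpi
      obtain ⟨δ, _, heq⟩ := Finset.mem_image.mp hpk
      exact hik (hsingle_inj k i (congrArg Prod.snd heq)).symm
    have hφx : φ x = (evalR f x)⁻¹ := rfl
    have hpdφ : ∀ i, pd i φ x = -(evalR (pderiv i f) x * ((evalR f x) ^ 2)⁻¹) := by
      intro i
      rw [hφdef]
      exact pd_inv_evalR f i x hx
    have hne0 : ∀ i : Fin n, ((0 : Fin n → ℕ) = Pi.single i 1) ↔ False := by
      intro i
      simp [Ne.symm (hsingle_ne i)]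
    have hccA0 : ∀ γ : Fin n →₀ ℕ, cc ((γ : Fin n → ℕ), (0 : Fin n → ℕ)) = -(coeff γ b₀) := by
      intro γ
      rw [hccdef]
      simp [hne0, Finsupp.equivFunOnFinite_symm_coe]
    have hccA1 : ∀ (i : Fin n) (γ : Fin n →₀ ℕ),
        cc ((γ : Fin n → ℕ), (Pi.single i 1 : Fin n → ℕ)) = coeff γ (a i) := by
      intro i γ
      rw [hccdef]
      have hiff : ∀ k, ((Pi.single i 1 : Fin n → ℕ) = Pi.single k 1) ↔ (k = i) :=
        fun k => ⟨fun h => (hsingle_inj i k h).symm, fun h => by rw [h]⟩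
      simp [hsingle_ne i, hiff, Finset.sum_ite_eq', Finsupp.equivFunOnFinite_symm_coe]
    rw [Finset.sum_union hdisj, Finset.sum_biUnion hpair]
    have hs0 : ∑ p ∈ A₀, cc p * (∏ i, (x i : ℂ) ^ p.1 i) * pdIter p.2 φ x
        = -(evalR b₀ x * φ x) := by
      rw [hA₀def, Finset.sum_image (fun γ _ δ _ hpq =>
        DFunLike.coe_injective (congrArg Prod.fst hpq))]
      have hterm : ∀ γ ∈ b₀.support,
          cc ((γ : Fin n → ℕ), (0 : Fin n → ℕ)) * (∏ i, (x i : ℂ) ^ γ i)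
              * pdIter (0 : Fin n → ℕ) φ x
          = -(coeff γ b₀ * (∏ i, (x i : ℂ) ^ γ i) * φ x) := by
        intro γ _
        rw [hccA0, pdIter_zero]
        ring
      rw [Finset.sum_congr rfl hterm, Finset.sum_neg_distrib]
      rw [evalR, eval_eq', Finset.sum_mul]
    have hs1 : ∀ i : Fin n, ∑ p ∈ A₁ i, cc p * (∏ k, (x k : ℂ) ^ p.1 k) * pdIter p.2 φ x
        = evalR (a i) x * pd i φ x := by
      intro i
      rw [hA₁def]
      simp only
      rw [Finset.sum_image (fun γ _ δ _ hpq =>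
        DFunLike.coe_injective (congrArg Prod.fst hpq))]
      have hterm : ∀ γ ∈ (a i).support,
          cc ((γ : Fin n → ℕ), (Pi.single i 1 : Fin n → ℕ)) * (∏ k, (x k : ℂ) ^ γ k)
              * pdIter (Pi.single i 1 : Fin n → ℕ) φ x
          = coeff γ (a i) * (∏ k, (x k : ℂ) ^ γ k) * pd i φ x := by
        intro γ _
        rw [hccA1, pdIter_single]
      rw [Finset.sum_congr rfl hterm]
      rw [evalR, eval_eq', Finset.sum_mul]
    rw [hs0, Finset.sum_congr rfl (fun i _ => hs1 i)]
    have keyx : (∑ i, evalR (a i) x * evalR (pderiv i f) x) + evalR b₀ x * evalR f x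
        = evalR f x - ∑ i ∈ 𝒞, (x i : ℂ) * evalR (pderiv i f) x := by
      have hcast := congrArg (fun P => evalR P x) PI
      rw [hgdef] at hcast
      simpa [evalR, map_sum, map_mul, map_sub, eval_X] using hcast
    have e1 : ∑ i ∈ 𝒞, (x i : ℂ) * pd i φ x
        = (∑ i ∈ 𝒞, (x i : ℂ) * evalR (pderiv i f) x) * -(((evalR f x) ^ 2)⁻¹) := by
      rw [Finset.sum_mul]
      exact Finset.sum_congr rfl fun i _ => by rw [hpdφ i]; ring
    have e2 : ∑ i, evalR (a i) x * pd i φ x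
        = (∑ i, evalR (a i) x * evalR (pderiv i f) x) * -(((evalR f x) ^ 2)⁻¹) := by
      rw [Finset.sum_mul]
      exact Finset.sum_congr rfl fun i _ => by rw [hpdφ i]; ring
    rw [e1, e2, hφx]
    set F := evalR f x with hFdef
    set S1 := ∑ i ∈ 𝒞, (x i : ℂ) * evalR (pderiv i f) x with hS1def
    set S2 := ∑ i, evalR (a i) x * evalR (pderiv i f) x with hS2def
    set B := evalR b₀ x with hBdef
    have hFi : (F : ℂ)⁻¹ = F * (F ^ 2)⁻¹ := by
      rw [sq, mul_inv, ← mul_assoc, mul_inv_cancel₀ hx, one_mul]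
    rw [hFi]
    linear_combination (-((F ^ 2)⁻¹)) * keyx
end
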